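/- arXiv:2008.05379 — 6 statements merged into one kernel-verified Lean document; each statement's English description precedes it below -/
import Mathlib

section
/- Let E be an Archimedean vector lattice with the principal projection property, let x, y ∈ E, and let λ ∈ ℝ. If P_λ denotes the band projection onto the band generated by (x - λy)⁺, then λ·P_λ(y) ≤ P_λ(x). -/
variable (E : Type*) [AddCommGroup E] [Lattice E] [Module ℝ E]
  [CovariantClass E E (· + ·) (· ≤ ·)] [PosSMulMono ℝ E]

/-- The order on order bounded operators: `A ≤ B` iff `A x ≤ B x` for all `x ≥ 0`. -/
def opLE (A B : E →ₗ[ℝ] E) : Prop := ∀ x : E, 0 ≤ x → A x ≤ B x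

/-- An operator is order bounded when it maps order bounded sets to order bounded sets. -/
def IsOrderBoundedOp (T : E →ₗ[ℝ] E) : Prop :=
  ∀ a b : E, ∃ c d : E, ∀ x : E, a ≤ x → x ≤ b → c ≤ T x ∧ T x ≤ d

/-- Band preserving: `T x` lies in the band generated by `x`; equivalently `T x ⊥ y`
whenever `x ⊥ y`. -/
def IsBandPreserving (T : E →ₗ[ℝ] E) : Prop :=
  ∀ x y : E, |x| ⊓ |y| = 0 → |T x| ⊓ |y| = 0

/-- An orthomorphism is an order bounded band preserving linear operator. -/
def IsOrthomorphism (T : E →ₗ[ℝ] E) : Prop :=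
  IsOrderBoundedOp E T ∧ IsBandPreserving E T

/-- Membership in the band generated by a set `S` (in an Archimedean vector lattice this is
the double disjoint complement of `S`). -/
def memBandGen (S : Set E) (w : E) : Prop :=
  ∀ u : E, (∀ s ∈ S, |u| ⊓ |s| = 0) → |u| ⊓ |w| = 0

/-- `P` is the band projection onto the band `B`: it maps into `B` and `x - P x` is
disjoint from `B` for every `x`. -/
def IsBandProjectionOnto (B : Set E) (P : E →ₗ[ℝ] E) : Prop :=
  (∀ x : E, P x ∈ B) ∧ (∀ x : E, ∀ b ∈ B, |x - P x| ⊓ |b| = 0)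

/-- Order convergence of a net: there is a downward directed set `D` with infimum `0`
such that the net is eventually dominated by every member of `D`. -/
def OrderConvNet {ι : Type*} [Preorder ι] (y : ι → E) (l : E) : Prop :=
  ∃ D : Set E, D.Nonempty ∧ DirectedOn (· ≥ ·) D ∧ IsGLB D 0 ∧
    ∀ d ∈ D, ∃ i₀ : ι, ∀ i : ι, i₀ ≤ i → |y i - l| ≤ d

/-- Unbounded order convergence of a net. -/
def UOConvNet {ι : Type*} [Preorder ι] (y : ι → E) (l : E) : Prop :=
  ∀ u : E, 0 ≤ u → OrderConvNet E (fun i => |y i - l| ⊓ u) 0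

/-- Order convergence of a net of operators, in the operator order of the order bounded
operators: there is a downward directed set `D` of operators whose infimum among the
order bounded operators is `0`, eventually dominating `|T i - L|`. -/
def OpOrderConvNet {ι : Type*} [Preorder ι] (T : ι → E →ₗ[ℝ] E) (L : E →ₗ[ℝ] E) : Prop :=
  ∃ D : Set (E →ₗ[ℝ] E), D.Nonempty ∧
    DirectedOn (fun A B => opLE E B A) D ∧
    (∀ d ∈ D, opLE E 0 d) ∧
    (∀ C : E →ₗ[ℝ] E, IsOrderBoundedOp E C → (∀ d ∈ D, opLE E C d) → opLE E C 0) ∧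
    ∀ d ∈ D, ∃ i₀ : ι, ∀ i : ι, i₀ ≤ i → opLE E (L - T i) d ∧ opLE E (T i - L) d


section auxDisj
variable {E' : Type*} [AddCommGroup E'] [Lattice E']
  [CovariantClass E' E' (· + ·) (· ≤ ·)]

lemma disj_add' (a b c : E') (h1 : |a| ⊓ |c| = 0) (h2 : |b| ⊓ |c| = 0) :
    |a + b| ⊓ |c| = 0 := by
  have hle : |a + b| ⊓ |c| ≤ (|a| ⊓ |c|) + (|b| ⊓ |c|) := by
    have key : (|a| ⊓ |c|) + (|b| ⊓ |c|) =
        ((|a| + |b|) ⊓ (|a| + |c|)) ⊓ ((|c| + |b|) ⊓ (|c| + |c|)) := by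
      rw [inf_add, add_inf, add_inf]
    rw [key]
    refine le_inf (le_inf ?_ ?_) (le_inf ?_ ?_)
    · exact le_trans inf_le_left (abs_add_le a b)
    · exact le_trans inf_le_right (le_add_of_nonneg_left (abs_nonneg a))
    · exact le_trans inf_le_right (le_add_of_nonneg_right (abs_nonneg b))
    · exact le_trans inf_le_right (le_add_of_nonneg_right (abs_nonneg c))
  rw [h1, h2, add_zero] at hle
  exact le_antisymm hle (le_inf (abs_nonneg _) (abs_nonneg _))

end auxDisj

/-- in an Archimedean vector lattice with the principal projection property,
if `P` is the band projection onto the band generated by `(x - λ y)⁺`, then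
`λ • P y ≤ P x`. -/
theorem stmt0
    (harch : ∀ x y : E, (∀ n : ℕ, n • x ≤ y) → x ≤ 0)
    (hppp : ∀ z : E, ∃ Q : E →ₗ[ℝ] E, IsBandProjectionOnto E {w | memBandGen E {z} w} Q)
    (x y : E) (l : ℝ) (P : E →ₗ[ℝ] E)
    (hP : IsBandProjectionOnto E {w | memBandGen E {(x - l • y) ⊔ 0} w} P) :
    l • P y ≤ P x := by
    classical
  set z := x - l • y with hz
  have hdisj_pn : |z⁻| ⊓ |z ⊔ 0| = 0 := by
    rw [← posPart_def, abs_of_nonneg (negPart_nonneg z), abs_of_nonneg (posPart_nonneg z),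
      inf_comm, posPart_inf_negPart_eq_zero]
  have hmemzn : |z⁻| ⊓ |P z⁻| = 0 :=
    hP.1 z⁻ z⁻ (by rintro s rfl; exact hdisj_pn)
  have hself : |z⁻ - P z⁻| ⊓ |P z⁻| = 0 := hP.2 z⁻ (P z⁻) (hP.1 z⁻)
  have hPzn : P z⁻ = 0 := by
    have h1 : |z⁻ + -(z⁻ - P z⁻)| ⊓ |P z⁻| = 0 :=
      disj_add' _ _ _ hmemzn (by rwa [abs_neg])
    have heq : z⁻ + -(z⁻ - P z⁻) = P z⁻ := by abel
    rw [heq, inf_idem] at h1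
    have hle : P z⁻ ≤ 0 := (le_abs_self _).trans h1.le
    have hge : -(P z⁻) ≤ 0 := (neg_le_abs _).trans h1.le
    exact le_antisymm hle (by simpa using hge)
  have hPzp : 0 ≤ P z⁺ := by
    have hbc : |z⁺ - P z⁺| ⊓ |P z⁺| = 0 := hP.2 z⁺ (P z⁺) (hP.1 z⁺)
    have hsum : 0 ≤ P z⁺ + (z⁺ - P z⁺) := by
      have : P z⁺ + (z⁺ - P z⁺) = z⁺ := by abel
      rw [this]; exact posPart_nonneg z
    have hneg : -(P z⁺) ≤ z⁺ - P z⁺ := by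
      simpa using add_le_add_left hsum (-(P z⁺))
    have h1 : (P z⁺)⁻ ≤ |z⁺ - P z⁺| := by
      rw [negPart_def]
      exact sup_le (hneg.trans (le_abs_self _)) (abs_nonneg _)
    have h2 : (P z⁺)⁻ ≤ |P z⁺| := by
      rw [negPart_def]
      exact sup_le (neg_le_abs _) (abs_nonneg _)
    have h3 : (P z⁺)⁻ ≤ 0 := by
      calc (P z⁺)⁻ ≤ |z⁺ - P z⁺| ⊓ |P z⁺| := le_inf h1 h2
      _ = 0 := hbc
    have : (P z⁺)⁻ = 0 := le_antisymm h3 (negPart_nonneg _)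
    exact negPart_eq_zero.mp this
  have hPz : 0 ≤ P z := by
    have : P z = P z⁺ - P z⁻ := by
      rw [← map_sub, posPart_sub_negPart]
    rw [this, hPzn, sub_zero]; exact hPzp
  have : P z = P x - l • P y := by
    rw [hz, map_sub, map_smul]
  rw [this] at hPz
  exact sub_nonneg.mp hPz
end

section
/- Let E be a vector lattice and S, T orthomorphisms of E whose supremum S ∨ T exists in the order bounded operators. Then (S ∨ T)(x) = S(x) ∨ T(x) and (S ∧ T)(x) = S(x) ∧ T(x) for every x ∈ E⁺. -/
variable (E : Type*) [AddCommGroup E] [Lattice E] [Module ℝ E]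
  [CovariantClass E E (· + ·) (· ≤ ·)] [PosSMulMono ℝ E]

section MyHelpers
variable {E}
set_option linter.unusedSectionVars false

lemma my_inf_add_le {c a b : E} (hc : 0 ≤ c) (ha : 0 ≤ a) (hb : 0 ≤ b) :
    c ⊓ (a + b) ≤ c ⊓ a + c ⊓ b := by
  have h1 : c ⊓ (a + b) - c ⊓ a ≤ b := by
    rw [sub_le_iff_le_add]
    calc c ⊓ (a + b) ≤ (c + b) ⊓ (a + b) :=
          inf_le_inf_right _ (le_add_of_nonneg_right hb)
      _ = b + c ⊓ a := by rw [add_comm c b, add_comm a b, ← add_inf c a b]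
  have h2 : c ⊓ (a + b) - c ⊓ a ≤ c := by
    have := sub_le_sub (inf_le_left : c ⊓ (a+b) ≤ c) (le_inf hc ha)
    simpa using this
  have h3 : c ⊓ (a + b) - c ⊓ a ≤ c ⊓ b := le_inf h2 h1
  have h4 := sub_le_iff_le_add.1 h3
  rwa [add_comm (c ⊓ b) (c ⊓ a)] at h4

lemma my_sum_nonneg {s : Finset ℕ} {f : ℕ → E} (h : ∀ i ∈ s, 0 ≤ f i) :
    (0:E) ≤ ∑ i ∈ s, f i := by
  classical
  induction s using Finset.induction with
  | empty => simp
  | @insert a s ha ih =>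
    rw [Finset.sum_insert ha]
    exact add_nonneg (h a (Finset.mem_insert_self a s))
      (ih fun i hi => h i (Finset.mem_insert_of_mem hi))

lemma my_inf_sum_le {c : E} (hc : 0 ≤ c) {s : Finset ℕ} {f : ℕ → E}
    (hf : ∀ i ∈ s, 0 ≤ f i) : c ⊓ (∑ i ∈ s, f i) ≤ ∑ i ∈ s, c ⊓ f i := by
  classical
  induction s using Finset.induction with
  | empty => simpa using (inf_le_right : c ⊓ 0 ≤ 0)
  | @insert a s ha ih =>
    rw [Finset.sum_insert ha, Finset.sum_insert ha]
    have hsum : (0:E) ≤ ∑ i ∈ s, f i :=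
      my_sum_nonneg (fun i hi => hf i (Finset.mem_insert_of_mem hi))
    calc c ⊓ (f a + ∑ i ∈ s, f i) ≤ c ⊓ f a + c ⊓ (∑ i ∈ s, f i) :=
          my_inf_add_le hc (hf a (Finset.mem_insert_self a s)) hsum
      _ ≤ c ⊓ f a + ∑ i ∈ s, c ⊓ f i := by
          exact add_le_add_right (ih (fun i hi => hf i (Finset.mem_insert_of_mem hi))) _

lemma my_smul_sup {r : ℝ} (hr : 0 < r) (a b : E) : r • (a ⊔ b) = r • a ⊔ r • b := by
  apply le_antisymm
  · have h : a ⊔ b ≤ r⁻¹ • (r • a ⊔ r • b) := by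
      apply sup_le
      · have h0 : r • a ≤ r • a ⊔ r • b := le_sup_left
        have := smul_le_smul_of_nonneg_left h0 (inv_nonneg.2 hr.le)
        rwa [inv_smul_smul₀ hr.ne'] at this
      · have h0 : r • b ≤ r • a ⊔ r • b := le_sup_right
        have := smul_le_smul_of_nonneg_left h0 (inv_nonneg.2 hr.le)
        rwa [inv_smul_smul₀ hr.ne'] at this
    have := smul_le_smul_of_nonneg_left h hr.le
    rwa [smul_inv_smul₀ hr.ne'] at this
  · exact sup_le (smul_le_smul_of_nonneg_left le_sup_left hr.le)
      (smul_le_smul_of_nonneg_left le_sup_right hr.le)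

lemma my_smul_inf {r : ℝ} (hr : 0 < r) (a b : E) : r • (a ⊓ b) = r • a ⊓ r • b := by
  have h1 := my_smul_sup (E := E) hr (-a) (-b)
  have h2 : r • (a ⊓ b) = - (r • (-a ⊔ -b)) := by
    rw [← neg_inf, ← smul_neg, neg_neg]
  rw [h2, h1, neg_sup, smul_neg, smul_neg, neg_neg, neg_neg]

lemma my_posPart_smul {r : ℝ} (hr : 0 ≤ r) (a : E) : (r • a)⁺ = r • a⁺ := by
  rcases eq_or_lt_of_le hr with h | h
  · simp [← h]
  · show (r • a) ⊔ 0 = r • (a ⊔ 0)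
    rw [my_smul_sup h, smul_zero]

lemma my_negPart_smul {r : ℝ} (hr : 0 ≤ r) (a : E) : (r • a)⁻ = r • a⁻ := by
  have h1 : (r • a)⁻ = (-(r • a))⁺ := by simp
  have h2 : a⁻ = (-a)⁺ := by simp
  rw [h1, h2, ← smul_neg, my_posPart_smul hr]

lemma my_posPart_add_le (a b : E) : (a + b)⁺ ≤ a⁺ + b⁺ :=
  sup_le (add_le_add (le_posPart a) (le_posPart b))
    (add_nonneg (posPart_nonneg a) (posPart_nonneg b))

lemma my_negPart_add_le (a b : E) : (a + b)⁻ ≤ a⁻ + b⁻ := by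
  have h : (a + b)⁻ = (-a + -b)⁺ := by
    have : (a + b)⁻ = (-(a+b))⁺ := rfl
    rw [this, show -(a+b) = -a + -b by abel]
  rw [h]
  calc (-a + -b)⁺ ≤ (-a)⁺ + (-b)⁺ := my_posPart_add_le _ _
    _ = a⁻ + b⁻ := by simp

lemma my_negPart_sub_le (a b : E) : (a - b)⁻ ≤ a⁻ + b⁺ := by
  rw [sub_eq_add_neg]
  calc (a + -b)⁻ ≤ a⁻ + (-b)⁻ := my_negPart_add_le _ _
    _ = a⁻ + b⁺ := by simp

lemma my_posPart_le_abs (a : E) : a⁺ ≤ |a| := sup_le (le_abs_self a) (abs_nonneg a)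

lemma my_negPart_le_abs (a : E) : a⁻ ≤ |a| := sup_le (neg_le_abs a) (abs_nonneg a)

lemma my_sup_sub (a b c : E) : (a ⊔ b) - c = (a - c) ⊔ (b - c) := by
  rw [sub_eq_add_neg, add_comm, add_sup a b (-c), add_comm (-c) a, add_comm (-c) b,
    ← sub_eq_add_neg, ← sub_eq_add_neg]

lemma my_posPart_sup (a b : E) : (a ⊔ b)⁺ = a⁺ ⊔ b⁺ := by
  show (a ⊔ b) ⊔ 0 = (a ⊔ 0) ⊔ (b ⊔ 0)
  rw [sup_sup_sup_comm, sup_idem]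

/-- `a - a ⊓ b = (a - b)⁺`. -/
lemma my_sub_inf (a b : E) : a - a ⊓ b = (a - b)⁺ := by
  calc a - a ⊓ b = a + (-a ⊔ -b) := by rw [← neg_inf, sub_eq_add_neg]
    _ = (a + -a) ⊔ (a + -b) := add_sup (-a) (-b) a
    _ = 0 ⊔ (a - b) := by rw [add_neg_cancel, ← sub_eq_add_neg]
    _ = (a - b)⁺ := by rw [sup_comm]; rfl

lemma my_posPart_sub_posPart {w : E} (hw : 0 ≤ w) (a : E) : (a⁺ - w)⁺ = (a - w)⁺ := by
  have h1 : a⁺ - w = (a - w) ⊔ (0 - w) := my_sup_sub a 0 w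
  rw [h1, my_posPart_sup, zero_sub]
  have h3 : (-w)⁺ = 0 := posPart_eq_zero.2 (neg_nonpos.2 hw)
  rw [h3]
  exact sup_eq_left.2 (posPart_nonneg _)

lemma my_bp {V : E →ₗ[ℝ] E} (hbp : IsBandPreserving E V) {a b : E} (ha : 0 ≤ a)
    (hb : 0 ≤ b) (h : a ⊓ b = 0) : |V a| ⊓ b = 0 := by
  have := hbp a b (by rwa [abs_of_nonneg ha, abs_of_nonneg hb])
  rwa [abs_of_nonneg hb] at this

lemma my_bound {V : E →ₗ[ℝ] E} (hob : IsOrderBoundedOp E V) {y : E} (hy : 0 ≤ y) :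
    ∃ g : E, 0 ≤ g ∧ ∀ z, 0 ≤ z → z ≤ y → (V z)⁺ ≤ g ∧ (V z)⁻ ≤ g := by
  obtain ⟨c, d, h⟩ := hob 0 y
  obtain ⟨hc0, hd0⟩ := h 0 le_rfl hy
  rw [map_zero] at hc0 hd0
  refine ⟨d ⊔ (-c), le_trans hd0 le_sup_left, fun z hz1 hz2 => ?_⟩
  obtain ⟨h1, h2⟩ := h z hz1 hz2
  constructor
  · calc (V z)⁺ ≤ d⁺ := posPart_mono h2
      _ = d := posPart_eq_self.2 hd0
      _ ≤ d ⊔ (-c) := le_sup_left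
  · calc (V z)⁻ ≤ c⁻ := negPart_anti h1
      _ = -c := negPart_eq_neg.2 hc0
      _ ≤ d ⊔ (-c) := le_sup_right

/-- Core lemma: if `γ ≤ N • δ` with `δ, γ ≥ 0`, then `(V δ)⁺ ⊓ (V γ)⁻ = 0`. -/
lemma my_lemE (harch : ∀ x y : E, (∀ n : ℕ, n • x ≤ y) → x ≤ 0)
    {V : E →ₗ[ℝ] E} (hob : IsOrderBoundedOp E V) (hbp : IsBandPreserving E V)
    {δ γ : E} (hδ : 0 ≤ δ) (hγ : 0 ≤ γ) (N : ℕ) (hN : γ ≤ (N : ℝ) • δ) :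
    (V δ)⁺ ⊓ (V γ)⁻ = 0 := by
  obtain ⟨g, hg0, hg⟩ := my_bound hob hδ
  set q := (V δ)⁺ ⊓ (V γ)⁻ with hqdef
  have hq0 : 0 ≤ q := le_inf (posPart_nonneg _) (negPart_nonneg _)
  have hqδ : q ≤ (V δ)⁺ := inf_le_left
  have hqγ : q ≤ (V γ)⁻ := inf_le_right
  have key : ∀ m : ℕ, 1 ≤ m → q ≤ ((m:ℝ))⁻¹ • g := by
    intro m hm
    have hmR : (0:ℝ) < (m:ℝ) := by exact_mod_cast Nat.pos_of_ne_zero (by omega)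
    have hmR1 : (1:ℝ) ≤ (m:ℝ) := by exact_mod_cast hm
    set w : E := ((m:ℝ))⁻¹ • δ with hwdef
    have hw0 : 0 ≤ w := smul_nonneg (inv_nonneg.2 hmR.le) hδ
    have hδw : (m:ℝ) • w = δ := smul_inv_smul₀ hmR.ne' δ
    set t : ℕ → E := fun j => (γ - (j:ℝ) • w)⁺ with htdef
    set e : ℕ → E := fun j => t j ⊓ w with hedef
    have ht0 : t 0 = γ := by
      simp only [htdef, Nat.cast_zero, zero_smul, sub_zero]
      exact posPart_eq_self.2 hγ
    have htnn : ∀ j, 0 ≤ t j := fun j => posPart_nonneg _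
    have henn : ∀ j, 0 ≤ e j := fun j => le_inf (htnn j) hw0
    have hew : ∀ j, e j ≤ w := fun _ => inf_le_right
    have htsucc : ∀ j : ℕ, t (j+1) = (t j - w)⁺ := by
      intro j
      have harg : γ - (((j+1):ℕ):ℝ) • w = (γ - (j:ℝ) • w) - w := by
        push_cast
        rw [add_smul, one_smul]
        abel
      show (γ - (((j+1):ℕ):ℝ) • w)⁺ = ((γ - (j:ℝ) • w)⁺ - w)⁺
      rw [my_posPart_sub_posPart hw0, harg]
    have hte : ∀ j, t j = e j + t (j+1) := by
      intro j
      rw [htsucc j]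
      have h1 : (t j - w)⁺ = t j - t j ⊓ w := (my_sub_inf (t j) w).symm
      rw [h1]
      show t j = t j ⊓ w + (t j - t j ⊓ w)
      abel
    have htanti : ∀ i j : ℕ, i ≤ j → t j ≤ t i := by
      intro i j hij
      apply posPart_mono
      apply sub_le_sub_left
      have h1 : (0:E) ≤ ((j:ℝ) - (i:ℝ)) • w :=
        smul_nonneg (sub_nonneg.2 (by exact_mod_cast hij)) hw0
      rw [sub_smul] at h1
      exact sub_nonneg.1 h1
    have htK : t (N*m) = 0 := by
      apply posPart_eq_zero.2
      apply sub_nonpos.2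
      have : ((N*m : ℕ):ℝ) • w = (N:ℝ) • δ := by
        push_cast
        rw [hwdef, smul_smul, mul_inv_cancel_right₀ hmR.ne']
      rw [this]; exact hN
    set H : ℕ → E := fun j => q ⊓ (V (e j))⁻ with hHdef
    have hHnn : ∀ j, 0 ≤ H j := fun j => le_inf hq0 (negPart_nonneg _)
    have hHne : ∀ j, H j ≤ (V (e j))⁻ := fun _ => inf_le_right
    have hHq : ∀ j, H j ≤ q := fun _ => inf_le_left
    -- claim 1 : q ≤ ∑ H i
    have claim1 : q ≤ ∑ i ∈ Finset.range (N*m), H i := by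
      have hstep : ∀ j : ℕ, q ≤ (∑ i ∈ Finset.range j, H i) + q ⊓ (V (t j))⁻ := by
        intro j
        induction j with
        | zero =>
          simp only [Finset.range_zero, Finset.sum_empty, zero_add, ht0]
          exact le_of_eq (inf_eq_left.2 hqγ).symm
        | succ j ih =>
          have h1 : (V (t j))⁻ ≤ (V (e j))⁻ + (V (t (j+1)))⁻ := by
            rw [hte j, map_add]
            exact my_negPart_add_le _ _
          have h2 : q ⊓ (V (t j))⁻ ≤ H j + q ⊓ (V (t (j+1)))⁻ := by
            calc q ⊓ (V (t j))⁻ ≤ q ⊓ ((V (e j))⁻ + (V (t (j+1)))⁻) :=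
                  inf_le_inf_left _ h1
              _ ≤ q ⊓ (V (e j))⁻ + q ⊓ (V (t (j+1)))⁻ :=
                  my_inf_add_le hq0 (negPart_nonneg _) (negPart_nonneg _)
          calc q ≤ (∑ i ∈ Finset.range j, H i) + q ⊓ (V (t j))⁻ := ih
            _ ≤ (∑ i ∈ Finset.range j, H i) + (H j + q ⊓ (V (t (j+1)))⁻) :=
                add_le_add_right h2 _
            _ = (∑ i ∈ Finset.range (j+1), H i) + q ⊓ (V (t (j+1)))⁻ := by
                rw [Finset.sum_range_succ]; abel
      have := hstep (N*m)
      rwa [htK, map_zero, show ((0:E))⁻ = 0 by simp, inf_eq_right.2 hq0, add_zero] at this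
    -- size bound
    have hHsize : ∀ j, H j ≤ ((m:ℝ))⁻¹ • g := by
      intro j
      have h1 : (m:ℝ) • e j ≤ δ := by
        rw [← hδw]
        exact smul_le_smul_of_nonneg_left (hew j) hmR.le
      have h2 : (0:E) ≤ (m:ℝ) • e j := smul_nonneg hmR.le (henn j)
      have h3 := (hg _ h2 h1).2
      have h4 : (V (e j))⁻ = ((m:ℝ))⁻¹ • (V ((m:ℝ) • e j))⁻ := by
        rw [map_smul, ← my_negPart_smul (inv_nonneg.2 hmR.le), inv_smul_smul₀ hmR.ne']
      calc H j ≤ (V (e j))⁻ := hHne j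
        _ = ((m:ℝ))⁻¹ • (V ((m:ℝ) • e j))⁻ := h4
        _ ≤ ((m:ℝ))⁻¹ • g := smul_le_smul_of_nonneg_left h3 (inv_nonneg.2 hmR.le)
    -- q is disjoint from (V w)⁻
    have hqw : q ⊓ (V w)⁻ = 0 := by
      have h1 : q ≤ (m:ℝ) • (V w)⁺ := by
        have : (V δ)⁺ = (m:ℝ) • (V w)⁺ := by
          rw [← hδw, map_smul, my_posPart_smul hmR.le]
        exact this ▸ hqδ
      have h2 : (V w)⁻ ≤ (m:ℝ) • (V w)⁻ := by
        have h3 : (0:E) ≤ ((m:ℝ) - 1) • (V w)⁻ :=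
          smul_nonneg (by linarith) (negPart_nonneg _)
        rw [sub_smul, one_smul] at h3
        exact sub_nonneg.1 h3
      apply le_antisymm _ (le_inf hq0 (negPart_nonneg _) |>.trans (le_of_eq rfl))
      · calc q ⊓ (V w)⁻ ≤ ((m:ℝ) • (V w)⁺) ⊓ ((m:ℝ) • (V w)⁻) :=
            inf_le_inf h1 h2
          _ = (m:ℝ) • ((V w)⁺ ⊓ (V w)⁻) := (my_smul_inf hmR _ _).symm
          _ = 0 := by rw [posPart_inf_negPart_eq_zero, smul_zero]
    -- H j ≤ (V (w - e j))⁺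
    have hHwe : ∀ j, H j ≤ q ⊓ (V (w - e j))⁺ := by
      intro j
      have hVe : (V (e j))⁻ ≤ (V w)⁻ + (V (w - e j))⁺ := by
        have : V (e j) = V w - V (w - e j) := by rw [map_sub]; abel
        rw [this]
        exact my_negPart_sub_le _ _
      have h1 : H j ≤ q ⊓ ((V w)⁻ + (V (w - e j))⁺) :=
        le_inf (hHq j) (le_trans (hHne j) hVe)
      calc H j ≤ q ⊓ (V w)⁻ + q ⊓ (V (w - e j))⁺ :=
          le_trans h1 (my_inf_add_le hq0 (negPart_nonneg _) (posPart_nonneg _))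
        _ = q ⊓ (V (w - e j))⁺ := by rw [hqw, zero_add]
    have hwenn : ∀ j, 0 ≤ w - e j := fun j => sub_nonneg.2 (hew j)
    -- (w - e j) ⊥ t (j+1)
    have hdisj_wt : ∀ j, (w - e j) ⊓ t (j+1) = 0 := by
      intro j
      have h1 : w - e j = (w - t j)⁺ := by
        show w - t j ⊓ w = (w - t j)⁺
        rw [inf_comm, my_sub_inf]
      have h2 : t (j+1) = (w - t j)⁻ := by
        rw [htsucc j]
        show (t j - w)⁺ = (-(w - t j))⁺
        rw [neg_sub]
      rw [h1, h2]
      exact posPart_inf_negPart_eq_zero _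
    -- H j ⊥ t (j+1)
    have hHt : ∀ j, H j ⊓ t (j+1) = 0 := by
      intro j
      apply le_antisymm _ (le_inf (hHnn j) (htnn (j+1)) |>.trans (le_of_eq rfl))
      calc H j ⊓ t (j+1) ≤ |V (w - e j)| ⊓ t (j+1) := by
            apply inf_le_inf_right
            exact le_trans (hHwe j) (le_trans inf_le_right (my_posPart_le_abs _))
        _ = 0 := my_bp hbp (hwenn j) (htnn (j+1)) (hdisj_wt j)
    -- H i ⊥ H j  for i < j
    have hdisjH : ∀ i j, i < j → H i ⊓ H j = 0 := by
      intro i j hij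
      have h1 : e j ≤ t (i+1) := le_trans inf_le_left (htanti (i+1) j hij)
      have h2 : H i ⊓ e j = 0 := by
        apply le_antisymm _ (le_inf (hHnn i) (henn j) |>.trans (le_of_eq rfl))
        calc H i ⊓ e j ≤ H i ⊓ t (i+1) := inf_le_inf_left _ h1
          _ = 0 := hHt i
      have h3 : |V (e j)| ⊓ H i = 0 := by
        apply my_bp hbp (henn j) (hHnn i)
        rw [inf_comm]; exact h2
      apply le_antisymm _ (le_inf (hHnn i) (hHnn j) |>.trans (le_of_eq rfl))
      calc H i ⊓ H j ≤ H i ⊓ |V (e j)| :=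
          inf_le_inf_left _ (le_trans (hHne j) (my_negPart_le_abs _))
        _ = 0 := by rw [inf_comm]; exact h3
    -- the sum is bounded by m⁻¹ g
    have hsum : ∀ J : ℕ, ∑ i ∈ Finset.range J, H i ≤ ((m:ℝ))⁻¹ • g := by
      intro J
      induction J with
      | zero => simpa using smul_nonneg (inv_nonneg.2 hmR.le) hg0
      | succ J ih =>
        have hS0 : (0:E) ≤ ∑ i ∈ Finset.range J, H i :=
          my_sum_nonneg (fun i _ => hHnn i)
        have hdd : H J ⊓ (∑ i ∈ Finset.range J, H i) = 0 := by
          apply le_antisymm _ (le_inf (hHnn J) hS0 |>.trans (le_of_eq rfl))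
          calc H J ⊓ (∑ i ∈ Finset.range J, H i) ≤ ∑ i ∈ Finset.range J, H J ⊓ H i :=
              my_inf_sum_le (hHnn J) (fun i _ => hHnn i)
            _ = 0 := by
              apply Finset.sum_eq_zero
              intro i hi
              rw [inf_comm]
              exact hdisjH i J (Finset.mem_range.1 hi)
        have hsup : (∑ i ∈ Finset.range J, H i) + H J
            = (∑ i ∈ Finset.range J, H i) ⊔ H J := by
          have := inf_add_sup (∑ i ∈ Finset.range J, H i) (H J)
          rw [inf_comm] at hdd
          rw [hdd, zero_add] at this
          exact this.symm
        rw [Finset.sum_range_succ, hsup]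
        exact sup_le ih (hHsize J)
    exact le_trans claim1 (hsum (N*m))
  -- Archimedean conclusion
  have harch_app : ∀ n : ℕ, n • q ≤ g := by
    intro n
    cases n with
    | zero => simpa using hg0
    | succ n =>
      have h := key (n+1) (by omega)
      have h2 := smul_le_smul_of_nonneg_left h (by positivity : (0:ℝ) ≤ ((n+1:ℕ):ℝ))
      rw [smul_inv_smul₀ (by positivity : ((n+1:ℕ):ℝ) ≠ 0)] at h2
      rwa [← Nat.cast_smul_eq_nsmul ℝ]
  exact le_antisymm (harch q g harch_app) hq0

end MyHelpers

section MyMain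
variable {E : Type*} [AddCommGroup E] [Lattice E] [Module ℝ E]
  [CovariantClass E E (· + ·) (· ≤ ·)] [PosSMulMono ℝ E]
set_option linter.unusedSectionVars false

/-- Main lemma: for an order bounded band preserving `V` and `x, y ≥ 0`,
`(V x)⁺ ⊓ (V y)⁻ = 0`. -/
lemma my_mainLem (harch : ∀ x y : E, (∀ n : ℕ, n • x ≤ y) → x ≤ 0)
    {V : E →ₗ[ℝ] E} (hob : IsOrderBoundedOp E V) (hbp : IsBandPreserving E V)
    {x y : E} (hx : 0 ≤ x) (hy : 0 ≤ y) : (V x)⁺ ⊓ (V y)⁻ = 0 := by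
  obtain ⟨g, hg0, hg⟩ := my_bound hob hy
  set p := (V x)⁺ ⊓ (V y)⁻ with hpdef
  have hp0 : 0 ≤ p := le_inf (posPart_nonneg _) (negPart_nonneg _)
  have hpx : p ≤ (V x)⁺ := inf_le_left
  have hpy : p ≤ (V y)⁻ := inf_le_right
  have key : ∀ k : ℕ, 1 ≤ k → p ≤ ((k:ℝ))⁻¹ • g := by
    intro k hk
    have hkR : (0:ℝ) < (k:ℝ) := by exact_mod_cast Nat.pos_of_ne_zero (by omega)
    have hkR1 : (1:ℝ) ≤ (k:ℝ) := by exact_mod_cast hk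
    set tk : E := (y - (k:ℝ) • x)⁺ with htkdef
    set bk : E := (y - (k:ℝ) • x)⁻ with hbkdef
    set z2 : E := ((2*k:ℕ):ℝ) • x with hz2def
    set t2k : E := (y - z2)⁺ with ht2kdef
    set uk : E := x ⊓ tk with hukdef
    set rk : E := x - uk with hrkdef
    have htk0 : 0 ≤ tk := posPart_nonneg _
    have ht2k0 : 0 ≤ t2k := posPart_nonneg _
    have hbk0 : 0 ≤ bk := negPart_nonneg _
    have huk0 : 0 ≤ uk := le_inf hx htk0
    have hrk0 : 0 ≤ rk := sub_nonneg.2 inf_le_left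
    -- m1 : k • uk ≤ y
    have m1 : (k:ℝ) • uk ≤ y := by
      have h1 : (k:ℝ) • uk ≤ ((k:ℝ) • tk) ⊓ ((k:ℝ) • x) := by
        rw [← my_smul_inf hkR]
        exact smul_le_smul_of_nonneg_left (le_of_eq (inf_comm x tk)) hkR.le
      have h2 : (k:ℝ) • x ≤ y + bk := by
        have h3 : (k:ℝ) • x - y ≤ bk := by
          have hb : bk = ((k:ℝ) • x - y)⁺ := by
            rw [hbkdef]
            show -(y - (k:ℝ) • x) ⊔ 0 = ((k:ℝ) • x - y) ⊔ 0
            rw [neg_sub]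
          rw [hb]
          exact le_posPart _
        have h4 := sub_le_iff_le_add.1 h3
        rwa [add_comm] at h4
      have h5 : ((k:ℝ) • tk) ⊓ (y + bk) ≤ ((k:ℝ) • tk) ⊓ y + ((k:ℝ) • tk) ⊓ bk :=
        my_inf_add_le (smul_nonneg hkR.le htk0) hy hbk0
      have h6 : ((k:ℝ) • tk) ⊓ bk = 0 := by
        apply le_antisymm _ (le_inf (smul_nonneg hkR.le htk0) hbk0)
        have hb2 : bk ≤ (k:ℝ) • bk := by
          have h7 : (0:E) ≤ ((k:ℝ) - 1) • bk := smul_nonneg (by linarith) hbk0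
          rw [sub_smul, one_smul] at h7
          exact sub_nonneg.1 h7
        calc ((k:ℝ) • tk) ⊓ bk ≤ ((k:ℝ) • tk) ⊓ ((k:ℝ) • bk) := inf_le_inf_left _ hb2
          _ = (k:ℝ) • (tk ⊓ bk) := (my_smul_inf hkR _ _).symm
          _ = 0 := by rw [htkdef, hbkdef, posPart_inf_negPart_eq_zero, smul_zero]
      calc (k:ℝ) • uk ≤ ((k:ℝ) • tk) ⊓ ((k:ℝ) • x) := h1
        _ ≤ ((k:ℝ) • tk) ⊓ (y + bk) := inf_le_inf_left _ h2
        _ ≤ ((k:ℝ) • tk) ⊓ y + ((k:ℝ) • tk) ⊓ bk := h5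
        _ ≤ y + 0 := add_le_add inf_le_right (le_of_eq h6)
        _ = y := add_zero y
    -- m2 : (V uk)⁺ ≤ k⁻¹ • g
    have m2 : (V uk)⁺ ≤ ((k:ℝ))⁻¹ • g := by
      have h2 : (0:E) ≤ (k:ℝ) • uk := smul_nonneg hkR.le huk0
      have h3 := (hg _ h2 m1).1
      have h4 : (V uk)⁺ = ((k:ℝ))⁻¹ • (V ((k:ℝ) • uk))⁺ := by
        rw [map_smul, ← my_posPart_smul (inv_nonneg.2 hkR.le), inv_smul_smul₀ hkR.ne']
      rw [h4]
      exact smul_le_smul_of_nonneg_left h3 (inv_nonneg.2 hkR.le)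
    -- m3 : p ≤ p ⊓ (V rk)⁺ + k⁻¹ • g
    have m3 : p ≤ p ⊓ (V rk)⁺ + ((k:ℝ))⁻¹ • g := by
      have h1 : (V x)⁺ ≤ (V uk)⁺ + (V rk)⁺ := by
        have h0 : V x = V uk + V rk := by rw [hrkdef, map_sub]; abel
        rw [h0]
        exact my_posPart_add_le _ _
      have h2 : p ≤ p ⊓ ((V uk)⁺ + (V rk)⁺) := le_inf le_rfl (le_trans hpx h1)
      have h3 : p ⊓ ((V uk)⁺ + (V rk)⁺) ≤ p ⊓ (V uk)⁺ + p ⊓ (V rk)⁺ :=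
        my_inf_add_le hp0 (posPart_nonneg _) (posPart_nonneg _)
      calc p ≤ p ⊓ (V uk)⁺ + p ⊓ (V rk)⁺ := le_trans h2 h3
        _ ≤ ((k:ℝ))⁻¹ • g + p ⊓ (V rk)⁺ := add_le_add_left (le_trans inf_le_right m2) _
        _ = p ⊓ (V rk)⁺ + ((k:ℝ))⁻¹ • g := add_comm _ _
    -- m4 : rk ⊓ t2k = 0
    have m4 : rk ⊓ t2k = 0 := by
      set s : E := x - tk with hsdef
      set u : E := y - z2 with hudef
      have hrks : rk = s⁺ := by rw [hrkdef, hukdef, hsdef, my_sub_inf]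
      have hsum_np : s + u ≤ 0 := by
        have h1 : y - (k:ℝ) • x ≤ tk := le_posPart _
        have h2 : s + u ≤ x + (k:ℝ) • x - z2 := by
          have hneg : -tk ≤ -(y - (k:ℝ) • x) := by
            have := sub_le_sub_left h1 (0:E)
            simpa using this
          calc s + u = x + (-tk) + (y - z2) := by rw [hsdef, hudef]; abel
            _ ≤ x + (-(y - (k:ℝ) • x)) + (y - z2) := by
                apply add_le_add_left
                exact add_le_add_right hneg x
            _ = x + (k:ℝ) • x - z2 := by abel
        have h3 : x + (k:ℝ) • x - z2 = ((1:ℝ) - (k:ℝ)) • x := by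
          rw [hz2def]
          push_cast
          rw [two_mul, add_smul, sub_smul, one_smul]
          abel
        have h4 : ((1:ℝ) - (k:ℝ)) • x ≤ 0 := by
          have h5 : (0:E) ≤ ((k:ℝ) - 1) • x := smul_nonneg (by linarith) hx
          rw [show (1:ℝ) - (k:ℝ) = -((k:ℝ) - 1) by ring, neg_smul]
          exact neg_nonpos.2 h5
        calc s + u ≤ ((1:ℝ) - (k:ℝ)) • x := h3 ▸ h2
          _ ≤ 0 := h4
      have hd : s⁺ ⊓ u⁺ = 0 := by
        have hd0 : (0:E) ≤ s⁺ ⊓ u⁺ := le_inf (posPart_nonneg _) (posPart_nonneg _)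
        have hsp : s⁺ = s + s⁻ := by
          have h := posPart_sub_negPart s
          rw [sub_eq_iff_eq_add] at h
          exact h
        have hup : u⁺ = u + u⁻ := by
          have h := posPart_sub_negPart u
          rw [sub_eq_iff_eq_add] at h
          exact h
        have h2 : s⁺ + u⁺ ≤ s⁻ + u⁻ := by
          calc s⁺ + u⁺ = (s + u) + (s⁻ + u⁻) := by rw [hsp, hup]; abel
            _ ≤ 0 + (s⁻ + u⁻) := add_le_add_left hsum_np _
            _ = s⁻ + u⁻ := zero_add _
        have h3 : s⁺ ⊓ u⁺ ≤ s⁻ + u⁻ := by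
          calc s⁺ ⊓ u⁺ ≤ (s⁺ ⊓ u⁺) + (s⁺ ⊓ u⁺) := le_add_of_nonneg_left hd0
            _ ≤ s⁺ + u⁺ := add_le_add inf_le_left inf_le_right
            _ ≤ s⁻ + u⁻ := h2
        have h4 : s⁺ ⊓ u⁺ ≤ (s⁺ ⊓ u⁺) ⊓ (s⁻ + u⁻) := le_inf le_rfl h3
        have h5 : (s⁺ ⊓ u⁺) ⊓ (s⁻ + u⁻) ≤ (s⁺ ⊓ u⁺) ⊓ s⁻ + (s⁺ ⊓ u⁺) ⊓ u⁻ :=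
          my_inf_add_le hd0 (negPart_nonneg _) (negPart_nonneg _)
        have h6 : (s⁺ ⊓ u⁺) ⊓ s⁻ = 0 := by
          apply le_antisymm _ (le_inf hd0 (negPart_nonneg _))
          calc (s⁺ ⊓ u⁺) ⊓ s⁻ ≤ s⁺ ⊓ s⁻ := inf_le_inf_right _ inf_le_left
            _ = 0 := posPart_inf_negPart_eq_zero s
        have h7 : (s⁺ ⊓ u⁺) ⊓ u⁻ = 0 := by
          apply le_antisymm _ (le_inf hd0 (negPart_nonneg _))
          calc (s⁺ ⊓ u⁺) ⊓ u⁻ ≤ u⁺ ⊓ u⁻ := inf_le_inf_right _ inf_le_right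
            _ = 0 := posPart_inf_negPart_eq_zero u
        apply le_antisymm _ hd0
        calc s⁺ ⊓ u⁺ ≤ (s⁺ ⊓ u⁺) ⊓ s⁻ + (s⁺ ⊓ u⁺) ⊓ u⁻ := le_trans h4 h5
          _ = 0 := by rw [h6, h7, add_zero]
      rw [hrks]
      show s⁺ ⊓ (y - z2)⁺ = 0
      exact hd
    -- m5 : p ≤ (V t2k)⁻  (uses Lemma E)
    have hz20 : (0:E) ≤ z2 := smul_nonneg (by positivity) hx
    have hyz : (0:E) ≤ y ⊓ z2 := le_inf hy hz20
    have hE : (V x)⁺ ⊓ (V (y ⊓ z2))⁻ = 0 :=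
      my_lemE harch hob hbp hx hyz (2*k) (by rw [← hz2def]; exact inf_le_right)
    have hysplit : V y = V (y ⊓ z2) + V t2k := by
      have h0 : y = y ⊓ z2 + t2k := by
        have h1 : y - y ⊓ z2 = t2k := by show y - y ⊓ z2 = (y - z2)⁺; exact my_sub_inf y z2
        rw [← h1]; abel
      conv_lhs => rw [h0]
      rw [map_add]
    have m5 : p ≤ (V t2k)⁻ := by
      have h1 : (V y)⁻ ≤ (V (y ⊓ z2))⁻ + (V t2k)⁻ := by
        rw [hysplit]
        exact my_negPart_add_le _ _
      have h2 : p ≤ p ⊓ ((V (y ⊓ z2))⁻ + (V t2k)⁻) := le_inf le_rfl (hpy.trans h1)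
      have h3 : p ⊓ ((V (y ⊓ z2))⁻ + (V t2k)⁻) ≤ p ⊓ (V (y ⊓ z2))⁻ + p ⊓ (V t2k)⁻ :=
        my_inf_add_le hp0 (negPart_nonneg _) (negPart_nonneg _)
      have h4 : p ⊓ (V (y ⊓ z2))⁻ = 0 := by
        apply le_antisymm _ (le_inf hp0 (negPart_nonneg _))
        calc p ⊓ (V (y ⊓ z2))⁻ ≤ (V x)⁺ ⊓ (V (y ⊓ z2))⁻ := inf_le_inf_right _ hpx
          _ = 0 := hE
      calc p ≤ p ⊓ (V (y ⊓ z2))⁻ + p ⊓ (V t2k)⁻ := le_trans h2 h3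
        _ = p ⊓ (V t2k)⁻ := by rw [h4, zero_add]
        _ ≤ (V t2k)⁻ := inf_le_right
    -- m7/m8 : P := p ⊓ (V rk)⁺ vanishes
    have m8 : p ⊓ (V rk)⁺ = 0 := by
      set P : E := p ⊓ (V rk)⁺ with hPdef
      have hP0 : (0:E) ≤ P := le_inf hp0 (posPart_nonneg _)
      have h1 : |V rk| ⊓ t2k = 0 := my_bp hbp hrk0 ht2k0 m4
      have h2 : P ⊓ t2k = 0 := by
        apply le_antisymm _ (le_inf hP0 ht2k0)
        calc P ⊓ t2k ≤ |V rk| ⊓ t2k :=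
            inf_le_inf_right _ (le_trans inf_le_right (my_posPart_le_abs _))
          _ = 0 := h1
      have h3 : |V t2k| ⊓ P = 0 := by
        apply my_bp hbp ht2k0 hP0
        rw [inf_comm]; exact h2
      have h4 : P ⊓ (V t2k)⁻ = 0 := by
        apply le_antisymm _ (le_inf hP0 (negPart_nonneg _))
        calc P ⊓ (V t2k)⁻ ≤ P ⊓ |V t2k| :=
            inf_le_inf_left _ (my_negPart_le_abs _)
          _ = 0 := by rw [inf_comm]; exact h3
      have h5 : P ≤ (V t2k)⁻ := le_trans inf_le_left m5
      calc P = P ⊓ (V t2k)⁻ := (inf_eq_left.2 h5).symm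
        _ = 0 := h4
    calc p ≤ p ⊓ (V rk)⁺ + ((k:ℝ))⁻¹ • g := m3
      _ = ((k:ℝ))⁻¹ • g := by rw [m8, zero_add]
  -- Archimedean conclusion
  have harch_app : ∀ n : ℕ, n • p ≤ g := by
    intro n
    cases n with
    | zero => simpa using hg0
    | succ n =>
      have h := key (n+1) (by omega)
      have h2 := smul_le_smul_of_nonneg_left h (by positivity : (0:ℝ) ≤ ((n+1:ℕ):ℝ))
      rw [smul_inv_smul₀ (by positivity : ((n+1:ℕ):ℝ) ≠ 0)] at h2
      rwa [← Nat.cast_smul_eq_nsmul ℝ]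
  exact le_antisymm (harch p g harch_app) hp0

end MyMain

section MyMain2
variable {E : Type*} [AddCommGroup E] [Lattice E] [Module ℝ E]
  [CovariantClass E E (· + ·) (· ≤ ·)] [PosSMulMono ℝ E]
set_option linter.unusedSectionVars false

lemma my_neg_ob {V : E →ₗ[ℝ] E} (hob : IsOrderBoundedOp E V) :
    IsOrderBoundedOp E (-V) := by
  intro a b
  obtain ⟨c, d, h⟩ := hob a b
  refine ⟨-d, -c, fun z h1 h2 => ?_⟩
  obtain ⟨e1, e2⟩ := h z h1 h2
  constructor
  · show -d ≤ -(V z)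
    have := sub_le_sub_left e2 (0:E); simpa using this
  · show -(V z) ≤ -c
    have := sub_le_sub_left e1 (0:E); simpa using this

lemma my_neg_bp {V : E →ₗ[ℝ] E} (hbp : IsBandPreserving E V) :
    IsBandPreserving E (-V) := by
  intro a b h
  have := hbp a b h
  simpa [LinearMap.neg_apply, abs_neg] using this

/-- Additivity of `z ↦ (V z)⁺` on the positive cone. -/
lemma my_posPart_addV (harch : ∀ x y : E, (∀ n : ℕ, n • x ≤ y) → x ≤ 0)
    {V : E →ₗ[ℝ] E} (hob : IsOrderBoundedOp E V) (hbp : IsBandPreserving E V)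
    {x y : E} (hx : 0 ≤ x) (hy : 0 ≤ y) : (V (x+y))⁺ = (V x)⁺ + (V y)⁺ := by
  have h1 : (V x)⁺ ⊓ (V y)⁻ = 0 := my_mainLem harch hob hbp hx hy
  have h2 : (V x)⁻ ⊓ (V y)⁺ = 0 := by
    have h := my_mainLem harch (my_neg_ob hob) (my_neg_bp hbp) hx hy
    simpa [LinearMap.neg_apply] using h
  have e : (V x)⁺ + (V y)⁺ - ((V x)⁻ + (V y)⁻) = V x + V y := by
    rw [show (V x)⁺ + (V y)⁺ - ((V x)⁻ + (V y)⁻)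
        = ((V x)⁺ - (V x)⁻) + ((V y)⁺ - (V y)⁻) by abel,
      posPart_sub_negPart, posPart_sub_negPart]
  have hP0 : (0:E) ≤ (V x)⁺ + (V y)⁺ := add_nonneg (posPart_nonneg _) (posPart_nonneg _)
  have hdisj : ((V x)⁺ + (V y)⁺) ⊓ ((V x)⁻ + (V y)⁻) = 0 := by
    apply le_antisymm _ (le_inf hP0 (add_nonneg (negPart_nonneg _) (negPart_nonneg _)))
    have h3 : ((V x)⁺ + (V y)⁺) ⊓ ((V x)⁻ + (V y)⁻)
        ≤ ((V x)⁺ + (V y)⁺) ⊓ (V x)⁻ + ((V x)⁺ + (V y)⁺) ⊓ (V y)⁻ :=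
      my_inf_add_le hP0 (negPart_nonneg _) (negPart_nonneg _)
    have h4 : ((V x)⁺ + (V y)⁺) ⊓ (V x)⁻ = 0 := by
      apply le_antisymm _ (le_inf hP0 (negPart_nonneg _))
      calc ((V x)⁺ + (V y)⁺) ⊓ (V x)⁻ = (V x)⁻ ⊓ ((V x)⁺ + (V y)⁺) := inf_comm _ _
        _ ≤ (V x)⁻ ⊓ (V x)⁺ + (V x)⁻ ⊓ (V y)⁺ :=
            my_inf_add_le (negPart_nonneg _) (posPart_nonneg _) (posPart_nonneg _)
        _ = 0 := by rw [inf_comm ((V x)⁻) ((V x)⁺), posPart_inf_negPart_eq_zero, h2, add_zero]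
    have h5 : ((V x)⁺ + (V y)⁺) ⊓ (V y)⁻ = 0 := by
      apply le_antisymm _ (le_inf hP0 (negPart_nonneg _))
      calc ((V x)⁺ + (V y)⁺) ⊓ (V y)⁻ = (V y)⁻ ⊓ ((V x)⁺ + (V y)⁺) := inf_comm _ _
        _ ≤ (V y)⁻ ⊓ (V x)⁺ + (V y)⁻ ⊓ (V y)⁺ :=
            my_inf_add_le (negPart_nonneg _) (posPart_nonneg _) (posPart_nonneg _)
        _ = 0 := by rw [inf_comm ((V y)⁻) ((V x)⁺), h1,
            inf_comm ((V y)⁻) ((V y)⁺), posPart_inf_negPart_eq_zero, add_zero]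
    calc ((V x)⁺ + (V y)⁺) ⊓ ((V x)⁻ + (V y)⁻)
        ≤ ((V x)⁺ + (V y)⁺) ⊓ (V x)⁻ + ((V x)⁺ + (V y)⁺) ⊓ (V y)⁻ := h3
      _ = 0 := by rw [h4, h5, add_zero]
  calc (V (x+y))⁺ = ((V x)⁺ + (V y)⁺ - ((V x)⁻ + (V y)⁻))⁺ := by rw [map_add, ← e]
    _ = ((V x)⁺ + (V y)⁺) - ((V x)⁺ + (V y)⁺) ⊓ ((V x)⁻ + (V y)⁻) :=
        (my_sub_inf _ _).symm
    _ = (V x)⁺ + (V y)⁺ := by rw [hdisj, sub_zero]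

/-- Extension of an additive positively-homogeneous map on the cone to a linear map. -/
lemma my_ext (F : E → E)
    (hFadd : ∀ a b : E, 0 ≤ a → 0 ≤ b → F (a+b) = F a + F b)
    (hFsmul : ∀ c : ℝ, 0 ≤ c → ∀ z : E, 0 ≤ z → F (c • z) = c • F z) :
    ∃ U : E →ₗ[ℝ] E, ∀ z : E, U z = F z⁺ - F z⁻ := by
  have hkey : ∀ a b c d : E, 0 ≤ a → 0 ≤ b → 0 ≤ c → 0 ≤ d → a + d = c + b →
      F a - F b = F c - F d := by
    intro a b c d ha hb hc hd h
    apply sub_eq_sub_iff_add_eq_add.2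
    calc F a + F d = F (a + d) := (hFadd a d ha hd).symm
      _ = F (c + b) := by rw [h]
      _ = F c + F b := hFadd c b hc hb
  refine ⟨⟨⟨fun z => F z⁺ - F z⁻, ?_⟩, ?_⟩, fun z => rfl⟩
  · intro x y
    show F (x+y)⁺ - F (x+y)⁻ = (F x⁺ - F x⁻) + (F y⁺ - F y⁻)
    have hsum : (x+y)⁺ + (x⁻ + y⁻) = (x⁺ + y⁺) + (x+y)⁻ := by
      apply sub_eq_sub_iff_add_eq_add.1
      rw [posPart_sub_negPart, show (x⁺ + y⁺) - (x⁻ + y⁻)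
          = (x⁺ - x⁻) + (y⁺ - y⁻) by abel, posPart_sub_negPart, posPart_sub_negPart]
    have h1 := hkey ((x+y)⁺) ((x+y)⁻) (x⁺ + y⁺) (x⁻ + y⁻) (posPart_nonneg _)
      (negPart_nonneg _) (add_nonneg (posPart_nonneg _) (posPart_nonneg _))
      (add_nonneg (negPart_nonneg _) (negPart_nonneg _)) hsum
    rw [h1, hFadd _ _ (posPart_nonneg _) (posPart_nonneg _),
      hFadd _ _ (negPart_nonneg _) (negPart_nonneg _)]
    abel
  · intro c x
    show F (c • x)⁺ - F (c • x)⁻ = (RingHom.id ℝ) c • (F x⁺ - F x⁻)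
    simp only [RingHom.id_apply]
    rcases le_or_gt 0 c with hc | hc
    · rw [my_posPart_smul hc, my_negPart_smul hc, hFsmul c hc _ (posPart_nonneg _),
        hFsmul c hc _ (negPart_nonneg _), smul_sub]
    · have hc' : (0:ℝ) ≤ -c := by linarith
      have hx1 : c • x = (-c) • (-x) := by rw [neg_smul, smul_neg, neg_neg]
      have hx2 : (c • x)⁺ = (-c) • x⁻ := by
        rw [hx1, my_posPart_smul hc', show (-x)⁺ = x⁻ from by simp]
      have hx3 : (c • x)⁻ = (-c) • x⁺ := by
        rw [hx1, my_negPart_smul hc', show (-x)⁻ = x⁺ from by simp]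
      rw [hx2, hx3, hFsmul (-c) hc' _ (negPart_nonneg _), hFsmul (-c) hc' _ (posPart_nonneg _),
        neg_smul, neg_smul, smul_sub]
      abel

end MyMain2

set_option maxHeartbeats 1000000 in
/-- if `S, T` are orthomorphisms of a vector lattice whose supremum `R`
(resp. infimum `R'`) exists in the order bounded operators, then `R x = S x ⊔ T x`
and `R' x = S x ⊓ T x` for every `x ≥ 0`. -/
theorem stmt5
    (harch : ∀ x y : E, (∀ n : ℕ, n • x ≤ y) → x ≤ 0)
    (S T R R' : E →ₗ[ℝ] E)
    (hS : IsOrthomorphism E S) (hT : IsOrthomorphism E T)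
    (hR : IsOrderBoundedOp E R) (hR' : IsOrderBoundedOp E R')
    (hRub : opLE E S R ∧ opLE E T R)
    (hRlub : ∀ U : E →ₗ[ℝ] E, IsOrderBoundedOp E U → opLE E S U → opLE E T U → opLE E R U)
    (hR'lb : opLE E R' S ∧ opLE E R' T)
    (hR'glb : ∀ U : E →ₗ[ℝ] E, IsOrderBoundedOp E U → opLE E U S → opLE E U T → opLE E U R') :
    ∀ x : E, 0 ≤ x → R x = S x ⊔ T x ∧ R' x = S x ⊓ T x := by
  obtain ⟨hSob, hSbp⟩ := hS
  obtain ⟨hTob, hTbp⟩ := hT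
  set V : E →ₗ[ℝ] E := S - T with hVdef
  have hVz : ∀ z, V z = S z - T z := fun z => LinearMap.sub_apply S T z
  have hVob : IsOrderBoundedOp E V := by
    intro a b
    obtain ⟨c1, d1, h1⟩ := hSob a b
    obtain ⟨c2, d2, h2⟩ := hTob a b
    refine ⟨c1 - d2, d1 - c2, fun z hz1 hz2 => ?_⟩
    obtain ⟨e1, e2⟩ := h1 z hz1 hz2
    obtain ⟨f1, f2⟩ := h2 z hz1 hz2
    rw [hVz]
    exact ⟨sub_le_sub e1 f2, sub_le_sub e2 f1⟩
  have hVbp : IsBandPreserving E V := by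
    intro a b h
    have h1 := hSbp a b h
    have h2 := hTbp a b h
    have h3 : |V a| ≤ |S a| + |T a| := by
      rw [hVz, sub_eq_add_neg]
      calc |S a + -T a| ≤ |S a| + |-T a| := abs_add_le _ _
        _ = |S a| + |T a| := by rw [abs_neg]
    apply le_antisymm _ (le_inf (abs_nonneg _) (abs_nonneg _))
    calc |V a| ⊓ |b| = |b| ⊓ |V a| := inf_comm _ _
      _ ≤ |b| ⊓ (|S a| + |T a|) := inf_le_inf_left _ h3
      _ ≤ |b| ⊓ |S a| + |b| ⊓ |T a| :=
          my_inf_add_le (abs_nonneg _) (abs_nonneg _) (abs_nonneg _)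
      _ = 0 := by rw [inf_comm |b| |S a|, inf_comm |b| |T a|, h1, h2, add_zero]
  set F : E → E := fun z => S z ⊔ T z with hFdef
  have hFV : ∀ z, F z = T z + (V z)⁺ := by
    intro z
    rw [hVz]
    show S z ⊔ T z = T z + ((S z - T z) ⊔ 0)
    rw [add_sup (S z - T z) 0 (T z), add_zero, show T z + (S z - T z) = S z by abel]
  have hFadd : ∀ a b : E, 0 ≤ a → 0 ≤ b → F (a+b) = F a + F b := by
    intro a b ha hb
    rw [hFV, hFV, hFV, my_posPart_addV harch hVob hVbp ha hb, map_add]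
    abel
  have hFsmul : ∀ c : ℝ, 0 ≤ c → ∀ z : E, 0 ≤ z → F (c • z) = c • F z := by
    intro c hc z hz
    rcases eq_or_lt_of_le hc with h | h
    · rw [← h, zero_smul, zero_smul]
      show S 0 ⊔ T 0 = 0
      rw [map_zero, map_zero, sup_idem]
    · show S (c • z) ⊔ T (c • z) = c • (S z ⊔ T z)
      rw [map_smul, map_smul, my_smul_sup h]
  obtain ⟨U, hU⟩ := my_ext F hFadd hFsmul
  have hF0 : F 0 = 0 := by
    show S 0 ⊔ T 0 = 0
    rw [map_zero, map_zero, sup_idem]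
  have hUx : ∀ z : E, 0 ≤ z → U z = S z ⊔ T z := by
    intro z hz
    rw [hU, posPart_eq_self.2 hz, negPart_eq_zero.2 hz, hF0, sub_zero]
  have hUob : IsOrderBoundedOp E U := by
    intro a b
    obtain ⟨c1, d1, h1⟩ := hSob 0 b⁺
    obtain ⟨c2, d2, h2⟩ := hTob 0 b⁺
    obtain ⟨c3, d3, h3⟩ := hSob 0 a⁻
    obtain ⟨c4, d4, h4⟩ := hTob 0 a⁻
    refine ⟨c1 - (d3 ⊔ d4), (d1 ⊔ d2) - c3, fun z hz1 hz2 => ?_⟩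
    have hzp : z⁺ ≤ b⁺ := posPart_mono hz2
    have hzn : z⁻ ≤ a⁻ := negPart_anti hz1
    obtain ⟨e1, e2⟩ := h1 z⁺ (posPart_nonneg _) hzp
    obtain ⟨f1, f2⟩ := h2 z⁺ (posPart_nonneg _) hzp
    obtain ⟨e3, e4⟩ := h3 z⁻ (negPart_nonneg _) hzn
    obtain ⟨f3, f4⟩ := h4 z⁻ (negPart_nonneg _) hzn
    have hFb1 : c1 ≤ F z⁺ := le_trans e1 le_sup_left
    have hFb2 : F z⁺ ≤ d1 ⊔ d2 := sup_le (le_trans e2 le_sup_left) (le_trans f2 le_sup_right)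
    have hFa1 : c3 ≤ F z⁻ := le_trans e3 le_sup_left
    have hFa2 : F z⁻ ≤ d3 ⊔ d4 := sup_le (le_trans e4 le_sup_left) (le_trans f4 le_sup_right)
    rw [hU]
    exact ⟨sub_le_sub hFb1 hFa2, sub_le_sub hFb2 hFa1⟩
  intro x hx
  have hSU : opLE E S U := fun z hz => by rw [hUx z hz]; exact le_sup_left
  have hTU : opLE E T U := fun z hz => by rw [hUx z hz]; exact le_sup_right
  have hRU := hRlub U hUob hSU hTU x hx
  have hR1 : R x = S x ⊔ T x := by
    apply le_antisymm
    · rw [← hUx x hx]; exact hRU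
    · exact sup_le (hRub.1 x hx) (hRub.2 x hx)
  set U' : E →ₗ[ℝ] E := S + T - U with hU'def
  have hU'z : ∀ z, U' z = S z + T z - U z := by
    intro z
    rw [hU'def]
    simp [LinearMap.sub_apply, LinearMap.add_apply]
  have hU'ob : IsOrderBoundedOp E U' := by
    intro a b
    obtain ⟨c1, d1, h1⟩ := hSob a b
    obtain ⟨c2, d2, h2⟩ := hTob a b
    obtain ⟨c3, d3, h3⟩ := hUob a b
    refine ⟨c1 + c2 - d3, d1 + d2 - c3, fun z hz1 hz2 => ?_⟩
    obtain ⟨e1, e2⟩ := h1 z hz1 hz2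
    obtain ⟨f1, f2⟩ := h2 z hz1 hz2
    obtain ⟨g1, g2⟩ := h3 z hz1 hz2
    rw [hU'z]
    exact ⟨sub_le_sub (add_le_add e1 f1) g2, sub_le_sub (add_le_add e2 f2) g1⟩
  have hU'S : opLE E U' S := by
    intro z hz
    rw [hU'z, hUx z hz]
    calc S z + T z - (S z ⊔ T z) ≤ S z + T z - T z := sub_le_sub_left le_sup_right _
      _ = S z := by abel
  have hU'T : opLE E U' T := by
    intro z hz
    rw [hU'z, hUx z hz]
    calc S z + T z - (S z ⊔ T z) ≤ S z + T z - S z := sub_le_sub_left le_sup_left _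
      _ = T z := by abel
  have hU'R' := hR'glb U' hU'ob hU'S hU'T x hx
  have hR2 : R' x = S x ⊓ T x := by
    apply le_antisymm
    · exact le_inf (hR'lb.1 x hx) (hR'lb.2 x hx)
    · have h1 : S x ⊓ T x = S x + T x - (S x ⊔ T x) :=
        eq_sub_of_add_eq (inf_add_sup (S x) (T x))
      rw [h1]
      calc S x + T x - (S x ⊔ T x) = U' x := by rw [hU'z, hUx x hx]
        _ ≤ R' x := hU'R'
  exact ⟨hR1, hR2⟩
end

section
/- Let E be a vector lattice and T an orthomorphism of E. Then |Tx| = |T||x| = |T(|x|)| for all x ∈ E. -/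
set_option linter.unusedSectionVars false
set_option linter.unusedVariables false


variable (E : Type*) [AddCommGroup E] [Lattice E] [Module ℝ E]
  [CovariantClass E E (· + ·) (· ≤ ·)] [PosSMulMono ℝ E]

namespace Stmt6Aux

variable {E}

lemma posPart_le_abs' (a : E) : a⁺ ≤ |a| := by
  rw [posPart_def]
  exact sup_le (le_abs_self a) (abs_nonneg a)

lemma negPart_le_abs' (a : E) : a⁻ ≤ |a| := by
  rw [negPart_def]
  exact sup_le (neg_le_abs a) (abs_nonneg a)

lemma posPart_add_le' (a b : E) : (a + b)⁺ ≤ a⁺ + b⁺ := by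
  rw [posPart_def]
  exact sup_le (add_le_add (le_posPart a) (le_posPart b))
    (add_nonneg (posPart_nonneg a) (posPart_nonneg b))

lemma negPart_add_le' (a b : E) : (a + b)⁻ ≤ a⁻ + b⁻ := by
  rw [negPart_def, neg_add]
  refine sup_le (add_le_add ?_ ?_) (add_nonneg (negPart_nonneg a) (negPart_nonneg b)) <;>
    · rw [negPart_def]; exact le_sup_left

/-- subadditivity of `⊓` against a sum, for nonnegative elements. -/
lemma inf_add_le3 {a b c : E} (ha : 0 ≤ a) (hb : 0 ≤ b) (hc : 0 ≤ c) :
    a ⊓ (b + c) ≤ a ⊓ b + a ⊓ c := by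
  set m := a ⊓ (b + c) with hm
  have h1 : m - a ≤ a ⊓ c := le_trans (sub_nonpos.2 inf_le_left) (le_inf ha hc)
  have h2 : m - b ≤ a ⊓ c := by
    refine le_inf ?_ ?_
    · exact sub_le_iff_le_add.2 (le_trans inf_le_left (le_add_of_nonneg_right hb))
    · exact sub_le_iff_le_add'.2 inf_le_right
  have h3 : m - a ⊓ b ≤ a ⊓ c := by
    rw [sub_inf]
    exact sup_le h1 h2
  exact sub_le_iff_le_add'.1 h3

lemma disj_add_eq_sup {a b : E} (h : a ⊓ b = 0) : a + b = a ⊔ b := by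
  rw [← inf_add_sup a b, h, zero_add]

lemma add_le_of_disj {a b B : E} (h : a ⊓ b = 0) (ha : a ≤ B) (hb : b ≤ B) :
    a + b ≤ B := by
  rw [disj_add_eq_sup h]
  exact sup_le ha hb

lemma inf_eq_zero_of_le {w x p q : E} (hw : 0 ≤ w) (hx : 0 ≤ x)
    (hwp : w ≤ p) (hxq : x ≤ q) (h : p ⊓ q = 0) : w ⊓ x = 0 :=
  le_antisymm (le_trans (inf_le_inf hwp hxq) h.le) (le_inf hw hx)

lemma le_of_le_add_of_disj {w x y : E} (hw : 0 ≤ w) (hx : 0 ≤ x) (hy : 0 ≤ y)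
    (hle : w ≤ x + y) (hdisj : w ⊓ x = 0) : w ≤ y := by
  have h1 : w = w ⊓ (x + y) := (inf_eq_left.2 hle).symm
  calc w = w ⊓ (x + y) := h1
    _ ≤ w ⊓ x + w ⊓ y := inf_add_le3 hw hx hy
    _ = w ⊓ y := by rw [hdisj, zero_add]
    _ ≤ y := inf_le_right

/-- For `|a| ⊓ |b| = 0`, `(a - b)⁺ = a⁺ + b⁻`. -/
lemma posPart_sub_of_disj {a b : E} (h : |a| ⊓ |b| = 0) : (a - b)⁺ = a⁺ + b⁻ := by
  set P := a⁺ + b⁻ with hP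
  set N := a⁻ + b⁺ with hN
  have hP0 : 0 ≤ P := add_nonneg (posPart_nonneg a) (negPart_nonneg b)
  have hN0 : 0 ≤ N := add_nonneg (negPart_nonneg a) (posPart_nonneg b)
  have hPN : P ⊓ N = 0 := by
    have h1 : P ⊓ N ≤ P ⊓ a⁻ + P ⊓ b⁺ :=
      inf_add_le3 hP0 (negPart_nonneg a) (posPart_nonneg b)
    have h2 : P ⊓ a⁻ ≤ a⁺ ⊓ a⁻ + b⁻ ⊓ a⁻ := by
      calc P ⊓ a⁻ = a⁻ ⊓ P := inf_comm _ _
        _ ≤ a⁻ ⊓ a⁺ + a⁻ ⊓ b⁻ :=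
          inf_add_le3 (negPart_nonneg a) (posPart_nonneg a) (negPart_nonneg b)
        _ = a⁺ ⊓ a⁻ + b⁻ ⊓ a⁻ := by rw [inf_comm a⁻ a⁺, inf_comm a⁻ b⁻]
    have h3 : P ⊓ b⁺ ≤ a⁺ ⊓ b⁺ + b⁻ ⊓ b⁺ := by
      calc P ⊓ b⁺ = b⁺ ⊓ P := inf_comm _ _
        _ ≤ b⁺ ⊓ a⁺ + b⁺ ⊓ b⁻ :=
          inf_add_le3 (posPart_nonneg b) (posPart_nonneg a) (negPart_nonneg b)
        _ = a⁺ ⊓ b⁺ + b⁻ ⊓ b⁺ := by rw [inf_comm b⁺ a⁺, inf_comm b⁺ b⁻]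
    have z1 : a⁺ ⊓ a⁻ = 0 := posPart_inf_negPart_eq_zero a
    have z2 : b⁻ ⊓ b⁺ = 0 := by rw [inf_comm]; exact posPart_inf_negPart_eq_zero b
    have z3 : b⁻ ⊓ a⁻ = 0 :=
      inf_eq_zero_of_le (negPart_nonneg b) (negPart_nonneg a)
        (negPart_le_abs' b) (negPart_le_abs' a) (by rw [inf_comm]; exact h)
    have z4 : a⁺ ⊓ b⁺ = 0 :=
      inf_eq_zero_of_le (posPart_nonneg a) (posPart_nonneg b)
        (posPart_le_abs' a) (posPart_le_abs' b) h
    have : P ⊓ N ≤ 0 := by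
      calc P ⊓ N ≤ P ⊓ a⁻ + P ⊓ b⁺ := h1
        _ ≤ (a⁺ ⊓ a⁻ + b⁻ ⊓ a⁻) + (a⁺ ⊓ b⁺ + b⁻ ⊓ b⁺) := add_le_add h2 h3
        _ = 0 := by rw [z1, z2, z3, z4]; simp
    exact le_antisymm this (le_inf hP0 hN0)
  have hd : a - b = P - N := by
    have h' : P - N = (a⁺ - a⁻) - (b⁺ - b⁻) := by rw [hP, hN]; abel
    rw [h', posPart_sub_negPart, posPart_sub_negPart]
  have hsup : P ⊔ N = P + N := (disj_add_eq_sup hPN).symm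
  calc (a - b)⁺ = (P - N) ⊔ (N - N) := by rw [hd, posPart_def, sub_self]
    _ = (-N + P) ⊔ (-N + N) := by rw [sub_eq_neg_add, sub_eq_neg_add]
    _ = -N + (P ⊔ N) := (add_sup P N (-N)).symm
    _ = -N + (P + N) := by rw [hsup]
    _ = P := by abel

lemma abs_sub_of_disj {a b : E} (h : |a| ⊓ |b| = 0) : |a - b| = |a| + |b| := by
  have h1 : (a - b)⁺ = a⁺ + b⁻ := posPart_sub_of_disj h
  have h2 : (a - b)⁻ = a⁻ + b⁺ := by
    have h' : |b| ⊓ |a| = 0 := by rw [inf_comm]; exact h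
    have := posPart_sub_of_disj h'
    calc (a - b)⁻ = (-(a - b))⁺ := (posPart_neg _).symm
      _ = (b - a)⁺ := by rw [neg_sub]
      _ = b⁺ + a⁻ := this
      _ = a⁻ + b⁺ := add_comm _ _
  calc |a - b| = (a - b)⁺ + (a - b)⁻ := (posPart_add_negPart _).symm
    _ = (a⁺ + b⁻) + (a⁻ + b⁺) := by rw [h1, h2]
    _ = (a⁺ + a⁻) + (b⁺ + b⁻) := by abel
    _ = |a| + |b| := by rw [posPart_add_negPart, posPart_add_negPart]

section withT

variable (T M : E →ₗ[ℝ] E)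

lemma TT (hbp : IsBandPreserving E T) :
    ∀ x y : E, |x| ⊓ |y| = 0 → |T x| ⊓ |T y| = 0 := by
  intro x y h
  have h1 : |T x| ⊓ |y| = 0 := hbp x y h
  have h2 : |y| ⊓ |T x| = 0 := by rw [inf_comm]; exact h1
  have h3 : |T y| ⊓ |T x| = 0 := hbp y (T x) h2
  rw [inf_comm]; exact h3

lemma Mpos (hMub : opLE E T M ∧ opLE E (-T) M) :
    ∀ z : E, 0 ≤ z → 0 ≤ M z := by
  intro z hz
  have h1 : T z ≤ M z := hMub.1 z hz
  have h2 : -(T z) ≤ M z := by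
    have := hMub.2 z hz
    simpa using this
  have h3 : (0 : E) ≤ M z + M z := by
    have := add_le_add h1 h2
    simpa using this
  have h4 : M z + M z = (2 : ℝ) • M z := (two_smul ℝ (M z)).symm
  have h5 : (0 : E) ≤ (2 : ℝ) • M z := h4 ▸ h3
  have := smul_le_smul_of_nonneg_left h5 (by norm_num : (0:ℝ) ≤ (2:ℝ)⁻¹)
  simpa [smul_smul] using this

lemma Mmono (hMub : opLE E T M ∧ opLE E (-T) M) :
    ∀ z y : E, z ≤ y → M z ≤ M y := by
  intro z y h
  have := Mpos T M hMub (y - z) (sub_nonneg.2 h)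
  rw [map_sub] at this
  exact sub_nonneg.1 this

lemma absT_le (hMub : opLE E T M ∧ opLE E (-T) M) :
    ∀ z : E, 0 ≤ z → |T z| ≤ M z := by
  intro z hz
  exact abs_le'.2 ⟨hMub.1 z hz, by simpa using hMub.2 z hz⟩

/-- The key splitting: a "node" `(ω, p, q)` splits into two disjoint children. -/
lemma split (hbp : IsBandPreserving E T) (p q ω : E)
    (hp : 0 ≤ p) (hq : 0 ≤ q) (hω : 0 ≤ ω)
    (h1 : ω ≤ (T p)⁺) (h2 : ω ≤ (T q)⁻) :
    ∃ ω₁ ω₂ : E, ω = ω₁ + ω₂ ∧ ω₁ ⊓ ω₂ = 0 ∧ 0 ≤ ω₁ ∧ 0 ≤ ω₂ ∧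
      ω₁ ≤ (T (p - p ⊓ q))⁺ ∧ ω₁ ≤ (T (p ⊓ q))⁻ ∧
      ω₂ ≤ (T (p ⊓ q))⁺ ∧ ω₂ ≤ (T (q - p ⊓ q))⁻ := by
  set c := p ⊓ q with hc
  set a := p - c with hadef
  set b := q - c with hbdef
  have ha0 : 0 ≤ a := sub_nonneg.2 inf_le_left
  have hb0 : 0 ≤ b := sub_nonneg.2 inf_le_right
  have hc0 : 0 ≤ c := le_inf hp hq
  have hab : a ⊓ b = 0 := by
    rw [hadef, hbdef, sub_eq_neg_add, sub_eq_neg_add, ← add_inf, ← hc]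
    exact neg_add_cancel c
  have habsab : |T a| ⊓ |T b| = 0 := by
    have : |a| ⊓ |b| = 0 := by rw [abs_of_nonneg ha0, abs_of_nonneg hb0]; exact hab
    exact TT T hbp a b this
  -- ω is disjoint from (T p)⁻ and (T q)⁺
  have hω1 : ω ⊓ (T p)⁻ = 0 :=
    inf_eq_zero_of_le hω (negPart_nonneg _) h1 le_rfl (posPart_inf_negPart_eq_zero _)
  have hω2 : ω ⊓ (T q)⁺ = 0 := by
    refine inf_eq_zero_of_le hω (posPart_nonneg _) h2 le_rfl ?_
    rw [inf_comm]; exact posPart_inf_negPart_eq_zero _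
  set s := (T p)⁻ + (T q)⁺ with hs
  have hs0 : 0 ≤ s := add_nonneg (negPart_nonneg _) (posPart_nonneg _)
  have hωs : ω ⊓ s = 0 := by
    have hle : ω ⊓ s ≤ ω ⊓ (T p)⁻ + ω ⊓ (T q)⁺ :=
      inf_add_le3 hω (negPart_nonneg _) (posPart_nonneg _)
    rw [hω1, hω2, add_zero] at hle
    exact le_antisymm hle (le_inf hω hs0)
  -- ω ≤ (T p - T q)⁺
  have hX : ω ≤ (T p)⁺ + (T q)⁻ := h1.trans (le_add_of_nonneg_right (negPart_nonneg _))
  have hexp : T p - T q = ((T p)⁺ + (T q)⁻) - s := by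
    rw [hs]
    nth_rewrite 1 [← posPart_sub_negPart (T p), ← posPart_sub_negPart (T q)]
    abel
  have hkey : ω ≤ (T p - T q)⁺ := by
    set g := ω ⊓ (T p - T q)⁺ with hg
    have hstep : ω - s ≤ g := by
      have e1 : ω - s ≤ ω ⊓ (T p - T q) := by
        refine le_inf (sub_le_self _ hs0) ?_
        rw [hexp]
        exact sub_le_sub_right hX s
      have e2 : ω ⊓ (T p - T q) ≤ g := inf_le_inf_left ω (le_posPart _)
      exact e1.trans e2
    have hωg : ω - g ≤ ω ⊓ s := by
      refine le_inf (sub_le_self _ (le_inf hω (posPart_nonneg _) : (0:E) ≤ g)) ?_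
      exact sub_le_comm.1 hstep
    rw [hωs] at hωg
    have : ω ≤ g := by
      have := sub_nonpos.1 hωg
      exact this
    exact this.trans inf_le_right
  have hpq : T p - T q = T a - T b := by
    rw [← map_sub, ← map_sub]
    congr 1
    rw [hadef, hbdef]; abel
  have hsplit : ω ≤ (T a)⁺ + (T b)⁻ := by
    have := hkey
    rw [hpq, posPart_sub_of_disj habsab] at this
    exact this
  set ω₁ := ω ⊓ (T a)⁺ with hω₁
  set ω₂ := ω ⊓ (T b)⁻ with hω₂
  have hω₁0 : 0 ≤ ω₁ := le_inf hω (posPart_nonneg _)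
  have hω₂0 : 0 ≤ ω₂ := le_inf hω (negPart_nonneg _)
  have hd : (T a)⁺ ⊓ (T b)⁻ = 0 :=
    inf_eq_zero_of_le (posPart_nonneg _) (negPart_nonneg _)
      (posPart_le_abs' _) (negPart_le_abs' _) habsab
  have hdisj : ω₁ ⊓ ω₂ = 0 :=
    inf_eq_zero_of_le hω₁0 hω₂0 inf_le_right inf_le_right hd
  have hsum : ω = ω₁ + ω₂ := by
    have le1 : ω ≤ ω₁ + ω₂ := by
      calc ω = ω ⊓ ((T a)⁺ + (T b)⁻) := (inf_eq_left.2 hsplit).symm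
        _ ≤ ω₁ + ω₂ := inf_add_le3 hω (posPart_nonneg _) (negPart_nonneg _)
    have le2 : ω₁ + ω₂ ≤ ω :=
      add_le_of_disj hdisj inf_le_left inf_le_left
    exact le_antisymm le1 le2
  refine ⟨ω₁, ω₂, hsum, hdisj, hω₁0, hω₂0, inf_le_right, ?_, ?_, inf_le_right⟩
  · -- ω₁ ≤ (T c)⁻
    have hq' : (q : E) = b + c := by rw [hbdef]; abel
    have e1 : ω₁ ≤ (T b)⁻ + (T c)⁻ := by
      calc ω₁ ≤ ω := inf_le_left
        _ ≤ (T q)⁻ := h2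
        _ = (T b + T c)⁻ := by rw [← map_add]; rw [← hq']
        _ ≤ (T b)⁻ + (T c)⁻ := negPart_add_le' _ _
    have e2 : ω₁ ⊓ (T b)⁻ = 0 :=
      inf_eq_zero_of_le hω₁0 (negPart_nonneg _) inf_le_right le_rfl hd
    exact le_of_le_add_of_disj hω₁0 (negPart_nonneg _) (negPart_nonneg _) e1 e2
  · -- ω₂ ≤ (T c)⁺
    have hp' : (p : E) = a + c := by rw [hadef]; abel
    have e1 : ω₂ ≤ (T a)⁺ + (T c)⁺ := by
      calc ω₂ ≤ ω := inf_le_left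
        _ ≤ (T p)⁺ := h1
        _ = (T a + T c)⁺ := by rw [← map_add]; rw [← hp']
        _ ≤ (T a)⁺ + (T c)⁺ := posPart_add_le' _ _
    have e2 : ω₂ ⊓ (T a)⁺ = 0 := by
      refine inf_eq_zero_of_le hω₂0 (posPart_nonneg _) inf_le_right le_rfl ?_
      rw [inf_comm]; exact hd
    exact le_of_le_add_of_disj hω₂0 (posPart_nonneg _) (posPart_nonneg _) e1 e2

/-- Recursive bound down the splitting tree. -/
lemma Knode (hbp : IsBandPreserving E T) (hMub : opLE E T M ∧ opLE E (-T) M) :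
    ∀ (m : ℕ) (ω p q B : E), 0 ≤ ω → 0 ≤ p → 0 ≤ q →
      ω ≤ (T p)⁺ → ω ≤ (T q)⁻ →
      (∀ z : E, 0 ≤ z → z ≤ p ⊓ q → (m + 1) • z ≤ p + q → M z ≤ B) →
      ω ≤ B := by
  intro m
  induction m with
  | zero =>
    intro ω p q B hω hp hq h1 h2 hyp
    obtain ⟨ω₁, ω₂, hsum, hdisj, h₁0, h₂0, _, hc₁, hc₂, _⟩ :=
      split T hbp p q ω hp hq hω h1 h2
    set c := p ⊓ q with hc
    have hc0 : 0 ≤ c := le_inf hp hq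
    have hMc : M c ≤ B := by
      refine hyp c hc0 le_rfl ?_
      have hle : c ≤ p + q := le_trans inf_le_left (le_add_of_nonneg_right hq)
      simpa using hle
    have hTc : |T c| ≤ M c := absT_le T M hMub c hc0
    have hω₁B : ω₁ ≤ B := hc₁.trans ((negPart_le_abs' _).trans (hTc.trans hMc))
    have hω₂B : ω₂ ≤ B := hc₂.trans ((posPart_le_abs' _).trans (hTc.trans hMc))
    rw [hsum]
    exact add_le_of_disj hdisj hω₁B hω₂B
  | succ m ih =>
    intro ω p q B hω hp hq h1 h2 hyp
    obtain ⟨ω₁, ω₂, hsum, hdisj, h₁0, h₂0, ha₁, hc₁, hc₂, hb₂⟩ :=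
      split T hbp p q ω hp hq hω h1 h2
    set c := p ⊓ q with hc
    set a := p - c with hadef
    set b := q - c with hbdef
    have ha0 : 0 ≤ a := sub_nonneg.2 inf_le_left
    have hb0 : 0 ≤ b := sub_nonneg.2 inf_le_right
    have hc0 : 0 ≤ c := le_inf hp hq
    have hω₁B : ω₁ ≤ B := by
      refine ih ω₁ a c B h₁0 ha0 hc0 ha₁ hc₁ ?_
      intro z hz hzac hzsum
      refine hyp z hz (le_trans hzac inf_le_right) ?_
      have hac : a + c = p := by rw [hadef]; abel
      rw [hac] at hzsum
      have hzc : z ≤ c := le_trans hzac inf_le_right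
      calc (m + 1 + 1) • z = (m + 1) • z + z := succ_nsmul z (m+1)
        _ ≤ p + c := add_le_add hzsum hzc
        _ ≤ p + q := add_le_add le_rfl inf_le_right
    have hω₂B : ω₂ ≤ B := by
      refine ih ω₂ c b B h₂0 hc0 hb0 hc₂ hb₂ ?_
      intro z hz hzcb hzsum
      refine hyp z hz (le_trans hzcb inf_le_left) ?_
      have hcb : c + b = q := by rw [hbdef]; abel
      rw [hcb] at hzsum
      have hzc : z ≤ c := le_trans hzcb inf_le_left
      calc (m + 1 + 1) • z = (m + 1) • z + z := succ_nsmul z (m+1)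
        _ ≤ q + c := add_le_add hzsum hzc
        _ ≤ q + p := add_le_add le_rfl inf_le_left
        _ = p + q := add_comm q p
    rw [hsum]
    exact add_le_of_disj hdisj hω₁B hω₂B

/-- The key claim: for `u, v ≥ 0`, `(T u)⁺ ⊓ (T v)⁻ = 0`. -/
lemma CL (harch : ∀ x y : E, (∀ n : ℕ, n • x ≤ y) → x ≤ 0)
    (hbp : IsBandPreserving E T) (hMub : opLE E T M ∧ opLE E (-T) M)
    (u v : E) (hu : 0 ≤ u) (hv : 0 ≤ v) : (T u)⁺ ⊓ (T v)⁻ = 0 := by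
  set w := (T u)⁺ ⊓ (T v)⁻ with hw
  have hw0 : 0 ≤ w := le_inf (posPart_nonneg _) (negPart_nonneg _)
  have huv0 : 0 ≤ u + v := add_nonneg hu hv
  have hn : ∀ n : ℕ, n • w ≤ M (u + v) := by
    intro n
    cases n with
    | zero => simpa using Mpos T M hMub (u + v) huv0
    | succ n =>
      have hB : w ≤ ((n + 1 : ℕ) : ℝ)⁻¹ • M (u + v) := by
        refine Knode T M hbp hMub n w u v _ hw0 hu hv inf_le_left inf_le_right ?_
        intro z hz hzuv hzsum
        have hcast : ((n + 1 : ℕ) : ℝ) • z ≤ u + v := by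
          rw [Nat.cast_smul_eq_nsmul]
          exact hzsum
        have hne : ((n + 1 : ℕ) : ℝ) ≠ 0 := by positivity
        have hinv : (0:ℝ) ≤ ((n + 1 : ℕ) : ℝ)⁻¹ := by positivity
        have hz' : z ≤ ((n + 1 : ℕ) : ℝ)⁻¹ • (u + v) := by
          have := smul_le_smul_of_nonneg_left hcast hinv
          rwa [inv_smul_smul₀ hne] at this
        calc M z ≤ M (((n + 1 : ℕ) : ℝ)⁻¹ • (u + v)) := Mmono T M hMub _ _ hz'
          _ = ((n + 1 : ℕ) : ℝ)⁻¹ • M (u + v) := map_smul M _ _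
      have hne : ((n + 1 : ℕ) : ℝ) ≠ 0 := by positivity
      have : ((n + 1 : ℕ) : ℝ) • w ≤ M (u + v) := by
        have := smul_le_smul_of_nonneg_left hB (by positivity : (0:ℝ) ≤ ((n + 1 : ℕ) : ℝ))
        rwa [smul_inv_smul₀ hne] at this
      rwa [Nat.cast_smul_eq_nsmul] at this
  exact le_antisymm (harch w (M (u + v)) hn) hw0

/-- Additivity of `x ↦ |T x|` on the positive cone. -/
lemma Sadd (harch : ∀ x y : E, (∀ n : ℕ, n • x ≤ y) → x ≤ 0)
    (hbp : IsBandPreserving E T) (hMub : opLE E T M ∧ opLE E (-T) M)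
    (u v : E) (hu : 0 ≤ u) (hv : 0 ≤ v) : |T (u + v)| = |T u| + |T v| := by
  set P := (T u)⁺ + (T v)⁺ with hP
  set N := (T u)⁻ + (T v)⁻ with hN
  have hP0 : 0 ≤ P := add_nonneg (posPart_nonneg _) (posPart_nonneg _)
  have hN0 : 0 ≤ N := add_nonneg (negPart_nonneg _) (negPart_nonneg _)
  have z1 : (T u)⁺ ⊓ (T u)⁻ = 0 := posPart_inf_negPart_eq_zero _
  have z2 : (T v)⁺ ⊓ (T v)⁻ = 0 := posPart_inf_negPart_eq_zero _
  have z3 : (T u)⁺ ⊓ (T v)⁻ = 0 := CL T M harch hbp hMub u v hu hv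
  have z4 : (T v)⁺ ⊓ (T u)⁻ = 0 := CL T M harch hbp hMub v u hv hu
  have hPN : P ⊓ N = 0 := by
    have h1 : P ⊓ N ≤ P ⊓ (T u)⁻ + P ⊓ (T v)⁻ :=
      inf_add_le3 hP0 (negPart_nonneg _) (negPart_nonneg _)
    have h2 : P ⊓ (T u)⁻ ≤ (T u)⁺ ⊓ (T u)⁻ + (T v)⁺ ⊓ (T u)⁻ := by
      calc P ⊓ (T u)⁻ = (T u)⁻ ⊓ P := inf_comm _ _
        _ ≤ (T u)⁻ ⊓ (T u)⁺ + (T u)⁻ ⊓ (T v)⁺ :=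
          inf_add_le3 (negPart_nonneg _) (posPart_nonneg _) (posPart_nonneg _)
        _ = (T u)⁺ ⊓ (T u)⁻ + (T v)⁺ ⊓ (T u)⁻ := by rw [inf_comm ((T u)⁻), inf_comm ((T u)⁻)]
    have h3 : P ⊓ (T v)⁻ ≤ (T u)⁺ ⊓ (T v)⁻ + (T v)⁺ ⊓ (T v)⁻ := by
      calc P ⊓ (T v)⁻ = (T v)⁻ ⊓ P := inf_comm _ _
        _ ≤ (T v)⁻ ⊓ (T u)⁺ + (T v)⁻ ⊓ (T v)⁺ :=
          inf_add_le3 (negPart_nonneg _) (posPart_nonneg _) (posPart_nonneg _)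
        _ = (T u)⁺ ⊓ (T v)⁻ + (T v)⁺ ⊓ (T v)⁻ := by rw [inf_comm ((T v)⁻), inf_comm ((T v)⁻)]
    have hle : P ⊓ N ≤ 0 := by
      calc P ⊓ N ≤ P ⊓ (T u)⁻ + P ⊓ (T v)⁻ := h1
        _ ≤ ((T u)⁺ ⊓ (T u)⁻ + (T v)⁺ ⊓ (T u)⁻) + ((T u)⁺ ⊓ (T v)⁻ + (T v)⁺ ⊓ (T v)⁻) :=
          add_le_add h2 h3
        _ = 0 := by rw [z1, z2, z3, z4]; simp
    exact le_antisymm hle (le_inf hP0 hN0)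
  have hTd : T (u + v) = P - N := by
    have h' : P - N = ((T u)⁺ - (T u)⁻) + ((T v)⁺ - (T v)⁻) := by rw [hP, hN]; abel
    rw [map_add, h', posPart_sub_negPart, posPart_sub_negPart]
  have habs : |T (u + v)| = P + N := by
    rw [hTd]
    have h1 : |P - N| = |P| + |N| := by
      refine abs_sub_of_disj ?_
      rw [abs_of_nonneg hP0, abs_of_nonneg hN0]
      exact hPN
    rw [h1, abs_of_nonneg hP0, abs_of_nonneg hN0]
  rw [habs, hP, hN, ← posPart_add_negPart (T u), ← posPart_add_negPart (T v)]
  abel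

lemma smul_sup' (r : ℝ) (hr : 0 ≤ r) (x y : E) : r • (x ⊔ y) = r • x ⊔ r • y := by
  rcases eq_or_lt_of_le hr with h | h
  · simp [← h]
  · refine le_antisymm ?_ (sup_le (smul_le_smul_of_nonneg_left le_sup_left hr)
      (smul_le_smul_of_nonneg_left le_sup_right hr))
    have hinv : (0:ℝ) ≤ r⁻¹ := by positivity
    have hne : r ≠ 0 := ne_of_gt h
    have h1 : x ≤ r⁻¹ • (r • x ⊔ r • y) := by
      have := smul_le_smul_of_nonneg_left (le_sup_left : r • x ≤ r • x ⊔ r • y) hinv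
      rwa [inv_smul_smul₀ hne] at this
    have h2 : y ≤ r⁻¹ • (r • x ⊔ r • y) := by
      have := smul_le_smul_of_nonneg_left (le_sup_right : r • y ≤ r • x ⊔ r • y) hinv
      rwa [inv_smul_smul₀ hne] at this
    have := smul_le_smul_of_nonneg_left (sup_le h1 h2) hr
    rwa [smul_inv_smul₀ hne] at this

lemma smul_posPart' (r : ℝ) (hr : 0 ≤ r) (x : E) : (r • x)⁺ = r • x⁺ := by
  rw [posPart_def, posPart_def, smul_sup' r hr x 0, smul_zero]

lemma smul_negPart' (r : ℝ) (hr : 0 ≤ r) (x : E) : (r • x)⁻ = r • x⁻ := by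
  rw [negPart_def, negPart_def, smul_sup' r hr (-x) 0, smul_zero, smul_neg]

lemma abs_smul' (r : ℝ) (hr : 0 ≤ r) (x : E) : |r • x| = r • |x| := by
  rw [← posPart_add_negPart (r • x), smul_posPart' r hr, smul_negPart' r hr,
    ← smul_add, posPart_add_negPart]

end withT

end Stmt6Aux

namespace Stmt6Aux

variable {E}

/-- The modulus of `T` as a linear operator, given additivity of `x ↦ |Tx|` on the cone. -/
noncomputable def Uop (T : E →ₗ[ℝ] E)
    (hadd : ∀ u v : E, 0 ≤ u → 0 ≤ v → |T (u + v)| = |T u| + |T v|) : E →ₗ[ℝ] E where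
  toFun x := |T x⁺| - |T x⁻|
  map_add' x y := by
    have key : (x + y)⁺ + (x⁻ + y⁻) = (x + y)⁻ + (x⁺ + y⁺) := by
      have h1 : (x + y)⁺ - (x + y)⁻ = (x⁺ + y⁺) - (x⁻ + y⁻) := by
        have e : (x⁺ + y⁺) - (x⁻ + y⁻) = (x⁺ - x⁻) + (y⁺ - y⁻) := by abel
        rw [e, posPart_sub_negPart, posPart_sub_negPart, posPart_sub_negPart]
      exact (sub_eq_sub_iff_add_eq_add.1 h1).trans (add_comm _ _)
    have A := hadd ((x + y)⁺) (x⁻ + y⁻) (posPart_nonneg _)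
      (add_nonneg (negPart_nonneg _) (negPart_nonneg _))
    have A2 := hadd x⁻ y⁻ (negPart_nonneg _) (negPart_nonneg _)
    have B := hadd ((x + y)⁻) (x⁺ + y⁺) (negPart_nonneg _)
      (add_nonneg (posPart_nonneg _) (posPart_nonneg _))
    have B2 := hadd x⁺ y⁺ (posPart_nonneg _) (posPart_nonneg _)
    have E1 : |T ((x + y)⁺ + (x⁻ + y⁻))| = |T ((x + y)⁻ + (x⁺ + y⁺))| := by rw [key]
    rw [A, A2, B, B2] at E1
    have E2 : |T ((x+y)⁺)| = |T ((x+y)⁻)| + (|T x⁺| + |T y⁺|) - (|T x⁻| + |T y⁻|) := by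
      rw [← E1]; abel
    show |T (x + y)⁺| - |T (x + y)⁻| = (|T x⁺| - |T x⁻|) + (|T y⁺| - |T y⁻|)
    rw [E2]; abel
  map_smul' r x := by
    rcases le_or_gt 0 r with hr | hr
    · simp only [RingHom.id_apply]
      rw [smul_posPart' r hr, smul_negPart' r hr, map_smul, map_smul,
        abs_smul' r hr, abs_smul' r hr, smul_sub]
    · have hr' : (0:ℝ) ≤ -r := by linarith
      have hrx : r • x = -((-r) • x) := by rw [neg_smul, neg_neg]
      have e1 : (r • x)⁺ = (-r) • x⁻ := by
        rw [hrx, posPart_neg, smul_negPart' _ hr']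
      have e2 : (r • x)⁻ = (-r) • x⁺ := by
        rw [hrx, negPart_neg, smul_posPart' _ hr']
      simp only [RingHom.id_apply]
      rw [e1, e2, map_smul, map_smul, abs_smul' _ hr', abs_smul' _ hr',
        neg_smul, neg_smul, smul_sub]
      abel

end Stmt6Aux

/-- for an orthomorphism `T` of a vector lattice and its modulus `M = |T|`
(the supremum of `T` and `-T` in the order bounded operators),
`|T x| = M (|x|) = |T (|x|)|` for all `x`. -/
theorem stmt6
    (harch : ∀ x y : E, (∀ n : ℕ, n • x ≤ y) → x ≤ 0)
    (T M : E →ₗ[ℝ] E) (hT : IsOrthomorphism E T)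
    (hM : IsOrderBoundedOp E M)
    (hMub : opLE E T M ∧ opLE E (-T) M)
    (hMlub : ∀ U : E →ₗ[ℝ] E, IsOrderBoundedOp E U → opLE E T U → opLE E (-T) U → opLE E M U) :
    ∀ x : E, |T x| = M (|x|) ∧ M (|x|) = |T (|x|)| := by
  obtain ⟨hob, hbp⟩ := hT
  have hadd : ∀ u v : E, 0 ≤ u → 0 ≤ v → |T (u + v)| = |T u| + |T v| :=
    fun u v hu hv => Stmt6Aux.Sadd T M harch hbp hMub u v hu hv
  set U := Stmt6Aux.Uop T hadd with hU
  have hUval : ∀ z : E, 0 ≤ z → U z = |T z| := by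
    intro z hz
    show |T z⁺| - |T z⁻| = |T z|
    rw [posPart_of_nonneg hz, negPart_of_nonneg hz, map_zero, abs_zero, sub_zero]
  have hUmono : ∀ z y : E, z ≤ y → U z ≤ U y := by
    intro z y h
    have h0 : (0:E) ≤ U (y - z) := by
      rw [hUval _ (sub_nonneg.2 h)]; exact abs_nonneg _
    rw [map_sub] at h0
    exact sub_nonneg.1 h0
  have hUob : IsOrderBoundedOp E U :=
    fun a b => ⟨U a, U b, fun x hax hxb => ⟨hUmono a x hax, hUmono x b hxb⟩⟩
  have hTU : opLE E T U := fun x hx => by rw [hUval x hx]; exact le_abs_self _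
  have hTU' : opLE E (-T) U := fun x hx => by
    rw [hUval x hx]
    simpa using neg_le_abs (T x)
  have hMU := hMlub U hUob hTU hTU'
  have MP : ∀ z : E, 0 ≤ z → M z = |T z| := by
    intro z hz
    refine le_antisymm ?_ (Stmt6Aux.absT_le T M hMub z hz)
    have := hMU z hz
    rwa [hUval z hz] at this
  intro x
  have h2 : M (|x|) = |T (|x|)| := MP (|x|) (abs_nonneg x)
  refine ⟨?_, h2⟩
  have hxdecomp : |x| = x⁺ + x⁻ := (posPart_add_negPart x).symm
  have hTabs : |T (|x|)| = |T x⁺| + |T x⁻| := by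
    rw [hxdecomp]; exact hadd x⁺ x⁻ (posPart_nonneg x) (negPart_nonneg x)
  have hdisj : |T x⁺| ⊓ |T x⁻| = 0 := by
    apply Stmt6Aux.TT T hbp
    rw [abs_of_nonneg (posPart_nonneg x), abs_of_nonneg (negPart_nonneg x)]
    exact posPart_inf_negPart_eq_zero x
  have hTx : |T x| = |T x⁺| + |T x⁻| := by
    have h' : T x = T x⁺ - T x⁻ := by rw [← map_sub, posPart_sub_negPart]
    rw [h', Stmt6Aux.abs_sub_of_disj hdisj]
  rw [hTx, h2, hTabs]
end

section
/- Let μ be Lebesgue measure on the Borel σ-algebra of [0,1], let 1 ≤ p ≤ ∞, let S ⊆ [0,1] be a Borel set, and define T_S : L^p[0,1] → L^p[0,1] by T_S(f) = (∫_S f dμ)·χ_S. Then T_S ∧ I = 0 in the order bounded operators on L^p[0,1], i.e., T_S is disjoint from the identity operator. -/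
variable (E : Type*) [AddCommGroup E] [Lattice E] [Module ℝ E]
  [CovariantClass E E (· + ·) (· ≤ ·)] [PosSMulMono ℝ E]

open MeasureTheory
open scoped ENNReal

/-- Lebesgue measure on the Borel σ-algebra of `[0,1]`. -/
noncomputable def mu01 : Measure ℝ := volume.restrict (Set.Icc 0 1)
open Filter

instance : IsFiniteMeasure mu01 := ⟨by
  rw [mu01, Measure.restrict_apply_univ, Real.volume_Icc]
  exact ENNReal.ofReal_lt_top⟩

lemma mu01_singleton_one : mu01 {(1:ℝ)} = 0 := by
  rw [mu01, Measure.restrict_apply (measurableSet_singleton 1)]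
  exact measure_mono_null Set.inter_subset_left Real.volume_singleton

lemma mu01_Ico_le (n i : ℕ) :
    mu01 (Set.Ico ((i:ℝ)/(n+1)) (((i:ℝ)+1)/(n+1))) ≤ ENNReal.ofReal (1/(n+1)) := by
  rw [mu01, Measure.restrict_apply measurableSet_Ico]
  refine le_trans (measure_mono Set.inter_subset_left) ?_
  rw [Real.volume_Ico]
  refine le_of_eq (congrArg _ ?_)
  field_simp
  ring

lemma cover01 (n : ℕ) (x : ℝ) (hx : x ∈ Set.Ico (0:ℝ) 1) :
    ∃ i ∈ Finset.range (n+1), x ∈ Set.Ico ((i:ℝ)/(n+1)) (((i:ℝ)+1)/(n+1)) := by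
  have hn : (0:ℝ) < (n:ℝ)+1 := by positivity
  have h0 : 0 ≤ x * ((n:ℝ)+1) := mul_nonneg hx.1 hn.le
  set i : ℕ := ⌊x * ((n:ℝ)+1)⌋.toNat with hidef
  have hiz : (i:ℤ) = ⌊x * ((n:ℝ)+1)⌋ := Int.toNat_of_nonneg (Int.floor_nonneg.mpr h0)
  have hieq : (i:ℝ) = ((⌊x * ((n:ℝ)+1)⌋ : ℤ) : ℝ) := by exact_mod_cast hiz
  have hfl : (i:ℝ) ≤ x * ((n:ℝ)+1) := by rw [hieq]; exact Int.floor_le _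
  have hlt : x * ((n:ℝ)+1) < (i:ℝ) + 1 := by rw [hieq]; exact Int.lt_floor_add_one _
  refine ⟨i, ?_, ?_, ?_⟩
  · rw [Finset.mem_range]
    have hx2 : x * ((n:ℝ)+1) < (n:ℝ)+1 := by nlinarith [hx.2]
    have : (i:ℝ) < (n:ℝ)+1 := lt_of_le_of_lt hfl hx2
    exact_mod_cast (by push_cast; linarith : (i:ℝ) < ((n+1:ℕ):ℝ))
  · rw [div_le_iff₀ hn]; exact hfl
  · rw [lt_div_iff₀ hn]; exact hlt

lemma Ico_pairwise_disjoint (n : ℕ) {i j : ℕ} (hij : i ≠ j) :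
    Disjoint (Set.Ico ((i:ℝ)/(n+1)) (((i:ℝ)+1)/(n+1)))
      (Set.Ico ((j:ℝ)/(n+1)) (((j:ℝ)+1)/(n+1))) := by
  have hn : (0:ℝ) < (n:ℝ)+1 := by positivity
  rcases lt_or_gt_of_ne hij with h | h
  · apply Set.Ico_disjoint_Ico.mpr
    refine le_trans (min_le_left _ _) (le_trans ?_ (le_max_right _ _))
    have : (i:ℝ) + 1 ≤ (j:ℝ) := by exact_mod_cast h
    gcongr
  · apply Set.Ico_disjoint_Ico.mpr
    refine le_trans (min_le_right _ _) (le_trans ?_ (le_max_left _ _))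
    have : (j:ℝ) + 1 ≤ (i:ℝ) := by exact_mod_cast h
    gcongr

/-- for `1 ≤ p ≤ ∞` and a Borel set `S ⊆ [0,1]`, the operator
`T f = (∫_S f dμ) • χ_S` on `L^p[0,1]` satisfies `T ⊓ I = 0` in the order bounded
operators, i.e. `0` is the infimum of `T` and the identity in the operator order. -/
theorem stmt7 (p : ℝ≥0∞) (hp : 1 ≤ p)
    (S : Set ℝ) (hS : MeasurableSet S) (hS01 : S ⊆ Set.Icc 0 1) (hfin : mu01 S ≠ ⊤)
    (T : Lp ℝ p mu01 →ₗ[ℝ] Lp ℝ p mu01)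
    (hT : ∀ f : Lp ℝ p mu01,
      T f = (∫ x in S, f x ∂mu01) • indicatorConstLp p hS hfin (1:ℝ)) :
    opLE (Lp ℝ p mu01) 0 T ∧ opLE (Lp ℝ p mu01) 0 LinearMap.id ∧
      ∀ U : Lp ℝ p mu01 →ₗ[ℝ] Lp ℝ p mu01, IsOrderBoundedOp (Lp ℝ p mu01) U →
        opLE (Lp ℝ p mu01) U T → opLE (Lp ℝ p mu01) U LinearMap.id →
          opLE (Lp ℝ p mu01) U 0 := by
  classical
  have hchi : (0 : Lp ℝ p mu01) ≤ indicatorConstLp p hS hfin (1:ℝ) := by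
    rw [← Lp.coeFn_nonneg]
    filter_upwards [indicatorConstLp_coeFn (p := p) (hs := hS) (hμs := hfin) (c := (1:ℝ))]
      with x h1
    rw [h1]
    exact Set.indicator_nonneg (fun _ _ => zero_le_one) x
  refine ⟨?_, ?_, ?_⟩
  · -- 0 ≤ T
    intro f hf
    rw [LinearMap.zero_apply, hT f]
    have hf0 : 0 ≤ᵐ[mu01] ⇑f := (Lp.coeFn_nonneg f).mpr hf
    have hc : 0 ≤ ∫ x in S, (f : ℝ → ℝ) x ∂mu01 := integral_nonneg_of_ae (ae_restrict_of_ae hf0)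
    rw [← Lp.coeFn_nonneg]
    filter_upwards [Lp.coeFn_smul (∫ x in S, (f : ℝ → ℝ) x ∂mu01)
        (indicatorConstLp p hS hfin (1:ℝ)),
      indicatorConstLp_coeFn (p := p) (hs := hS) (hμs := hfin) (c := (1:ℝ))] with x hs hi
    rw [hs, Pi.smul_apply, hi, smul_eq_mul]
    exact mul_nonneg hc (Set.indicator_nonneg (fun _ _ => zero_le_one) x)
  · -- 0 ≤ id
    intro f hf
    simpa using hf
  · -- main part
    intro U hUbd hUT hUI f hf
    rw [LinearMap.zero_apply]
    have hf0 : 0 ≤ᵐ[mu01] ⇑f := (Lp.coeFn_nonneg f).mpr hf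
    have hfint : Integrable (⇑f) mu01 := (Lp.memLp f).integrable hp
    have hUfint : Integrable (⇑(U f)) mu01 := (Lp.memLp (U f)).integrable hp
    -- key inequality for arbitrary measurable A
    have key : ∀ A : Set ℝ, MeasurableSet A → ∀ᵐ x ∂mu01,
        (U f : ℝ → ℝ) x ≤ (∫ y in S ∩ A, f y ∂mu01) * S.indicator (fun _ => (1:ℝ)) x
          + (f x - A.indicator (⇑f) x) := by
      intro A hA
      have hmemg : MemLp (A.indicator (⇑f)) p mu01 := (Lp.memLp f).indicator hA
      set g : Lp ℝ p mu01 := hmemg.toLp _ with hgdef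
      have hgcoe : ⇑g =ᵐ[mu01] A.indicator (⇑f) := hmemg.coeFn_toLp
      have hg0 : 0 ≤ g := by
        rw [← Lp.coeFn_nonneg]
        filter_upwards [hgcoe, hf0] with x hx hx0
        rw [hx]
        exact Set.indicator_nonneg (fun _ _ => hx0) x
      have hgf : g ≤ f := by
        rw [← Lp.coeFn_le]
        filter_upwards [hgcoe, hf0] with x hx hx0
        rw [hx]
        by_cases h : x ∈ A
        · simp [Set.indicator_of_mem h]
        · simpa [Set.indicator_of_notMem h] using hx0
      have hint : ∫ x in S, (g : ℝ → ℝ) x ∂mu01 = ∫ y in S ∩ A, f y ∂mu01 := by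
        rw [setIntegral_congr_ae hS (hgcoe.mono fun x hx _ => hx), setIntegral_indicator hA]
      have h1 : U f ≤ (∫ y in S ∩ A, f y ∂mu01) • indicatorConstLp p hS hfin (1:ℝ)
          + (f - g) := by
        have e : U f = U g + U (f - g) := by rw [← map_add, add_sub_cancel]
        rw [e, ← hint, ← hT g]
        have h2 := hUI (f - g) (sub_nonneg.mpr hgf)
        rw [LinearMap.id_apply] at h2
        exact add_le_add (hUT g hg0) h2
      have h2 := (Lp.coeFn_le _ _).mpr h1
      filter_upwards [h2,
        Lp.coeFn_add ((∫ y in S ∩ A, f y ∂mu01) • indicatorConstLp p hS hfin (1:ℝ)) (f - g),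
        Lp.coeFn_sub f g, hgcoe,
        Lp.coeFn_smul (∫ y in S ∩ A, f y ∂mu01) (indicatorConstLp p hS hfin (1:ℝ)),
        indicatorConstLp_coeFn (p := p) (hs := hS) (hμs := hfin) (c := (1:ℝ))]
        with x hle hadd hsub hgx hsmul hind
      simp only [hadd, Pi.add_apply, hsmul, Pi.smul_apply, smul_eq_mul, hind, hsub,
        Pi.sub_apply, hgx] at hle
      exact hle
    -- off S
    have offS : ∀ᵐ x ∂mu01, x ∉ S → (U f : ℝ → ℝ) x ≤ 0 := by
      filter_upwards [key Sᶜ hS.compl] with x hx hxS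
      rw [Set.inter_compl_self] at hx
      simp only [Measure.restrict_empty, integral_zero_measure, zero_mul, zero_add] at hx
      rwa [Set.indicator_of_mem (Set.mem_compl hxS), sub_self] at hx
    -- on S
    set C := ∫ x in S, f x ∂mu01 with hC
    have hC0 : 0 ≤ C := integral_nonneg_of_ae (ae_restrict_of_ae hf0)
    set φ : ℝ → ℝ := fun x => max ((U f : ℝ → ℝ) x) 0 with hφdef
    have hφint : Integrable φ mu01 := hUfint.pos_part
    have hφ0 : ∀ x, 0 ≤ φ x := fun x => le_max_right _ _
    set In : ℕ → ℕ → Set ℝ := fun n i => Set.Ico ((i:ℝ)/(n+1)) (((i:ℝ)+1)/(n+1)) with hIn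
    have hInm : ∀ n i, MeasurableSet (In n i) := fun n i => measurableSet_Ico
    set c : ℕ → ℕ → ℝ := fun n i => ∫ y in S ∩ In n i, f y ∂mu01 with hc
    have hc0 : ∀ n i, 0 ≤ c n i := fun n i => integral_nonneg_of_ae (ae_restrict_of_ae hf0)
    have keyall : ∀ᵐ x ∂mu01, ∀ n i : ℕ,
        (U f : ℝ → ℝ) x ≤ c n i * S.indicator (fun _ => (1:ℝ)) x
          + (f x - (In n i).indicator (⇑f) x) := by
      rw [ae_all_iff]; intro n; rw [ae_all_iff]; intro i
      exact key (In n i) (hInm n i)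
    have hpiece : ∀ n i : ℕ, ∀ᵐ x ∂mu01, x ∈ S ∩ In n i → φ x ≤ c n i := by
      intro n i
      filter_upwards [keyall] with x hx hxm
      have h := hx n i
      rw [Set.indicator_of_mem hxm.1, Set.indicator_of_mem hxm.2, mul_one] at h
      exact max_le (by linarith) (hc0 n i)
    have hstep : ∀ n : ℕ, ∫ x in S, φ x ∂mu01 ≤ C / ((n:ℝ)+1) := by
      intro n
      have hAm : ∀ i, MeasurableSet (S ∩ In n i) := fun i => hS.inter (hInm n i)
      have hdisj : Set.Pairwise ↑(Finset.range (n+1))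
          (Function.onFun Disjoint (fun i => S ∩ In n i)) := by
        intro i _ j _ hij
        exact Set.disjoint_of_subset Set.inter_subset_right Set.inter_subset_right
          (Ico_pairwise_disjoint n hij)
      set B : Set ℝ := ⋃ i ∈ Finset.range (n+1), S ∩ In n i with hB
      have hBS : B ⊆ S := by
        intro x hx
        simp only [hB, Set.mem_iUnion] at hx
        obtain ⟨i, _, hxi⟩ := hx
        exact hxi.1
      have hcover : S ∩ Set.Ico 0 1 ⊆ B := by
        rintro x ⟨hxS, hx01⟩
        obtain ⟨i, hi, hxi⟩ := cover01 n x hx01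
        exact Set.mem_biUnion hi ⟨hxS, hxi⟩
      have hSae : S =ᵐ[mu01] (S ∩ Set.Ico 0 1 : Set ℝ) := by
        rw [ae_eq_set]
        constructor
        · refine measure_mono_null ?_ mu01_singleton_one
          rintro x ⟨hxS, hx⟩
          have hIcc := hS01 hxS
          have : x ∉ Set.Ico (0:ℝ) 1 := fun h => hx ⟨hxS, h⟩
          rw [Set.mem_Ico, not_and] at this
          have := le_antisymm hIcc.2 (not_lt.mp (this hIcc.1))
          simp [this]
        · rw [Set.diff_eq_empty.mpr Set.inter_subset_left]
          exact measure_empty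
      have hsum : ∀ (ψ : ℝ → ℝ), Integrable ψ mu01 →
          ∫ x in B, ψ x ∂mu01 = ∑ i ∈ Finset.range (n+1), ∫ x in S ∩ In n i, ψ x ∂mu01 :=
        fun ψ hψ => integral_biUnion_finset _ (fun i _ => hAm i) hdisj
          (fun i _ => hψ.integrableOn)
      have hμIn : ∀ i : ℕ, (mu01 (S ∩ In n i)).toReal ≤ 1/((n:ℝ)+1) := by
        intro i
        have h1 : mu01 (S ∩ In n i) ≤ ENNReal.ofReal (1/((n:ℝ)+1)) :=
          le_trans (measure_mono Set.inter_subset_right) (mu01_Ico_le n i)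
        calc (mu01 (S ∩ In n i)).toReal ≤ (ENNReal.ofReal (1/((n:ℝ)+1))).toReal :=
              ENNReal.toReal_mono ENNReal.ofReal_ne_top h1
          _ = 1/((n:ℝ)+1) := ENNReal.toReal_ofReal (by positivity)
      calc ∫ x in S, φ x ∂mu01 = ∫ x in S ∩ Set.Ico 0 1, φ x ∂mu01 :=
            setIntegral_congr_set hSae
        _ ≤ ∫ x in B, φ x ∂mu01 :=
            setIntegral_mono_set hφint.integrableOn
              (ae_restrict_of_ae (Eventually.of_forall hφ0))
              (HasSubset.Subset.eventuallyLE hcover)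
        _ = ∑ i ∈ Finset.range (n+1), ∫ x in S ∩ In n i, φ x ∂mu01 := hsum φ hφint
        _ ≤ ∑ i ∈ Finset.range (n+1), c n i * (1/((n:ℝ)+1)) := by
            refine Finset.sum_le_sum fun i _ => ?_
            have hconst : IntegrableOn (fun _ : ℝ => c n i) (S ∩ In n i) mu01 :=
              (integrableOn_const_iff (C := c n i)).mpr (Or.inr (measure_lt_top _ _))
            calc ∫ x in S ∩ In n i, φ x ∂mu01
                  ≤ ∫ _ in S ∩ In n i, c n i ∂mu01 :=
                  setIntegral_mono_on_ae hφint.integrableOn hconst (hAm i) (hpiece n i)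
              _ = (mu01 (S ∩ In n i)).toReal * c n i := by
                  rw [setIntegral_const, smul_eq_mul]; rfl
              _ ≤ (1/((n:ℝ)+1)) * c n i :=
                  mul_le_mul_of_nonneg_right (hμIn i) (hc0 n i)
              _ = c n i * (1/((n:ℝ)+1)) := mul_comm _ _
        _ = (∑ i ∈ Finset.range (n+1), c n i) * (1/((n:ℝ)+1)) :=
            (Finset.sum_mul _ _ _).symm
        _ ≤ C * (1/((n:ℝ)+1)) := by
            refine mul_le_mul_of_nonneg_right ?_ (by positivity)
            rw [← hsum (⇑f) hfint]
            exact setIntegral_mono_set hfint.integrableOn (ae_restrict_of_ae hf0)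
              (HasSubset.Subset.eventuallyLE hBS)
        _ = C / ((n:ℝ)+1) := by ring
    have hlim : ∫ x in S, φ x ∂mu01 ≤ 0 := by
      have ht : Tendsto (fun n : ℕ => C / ((n:ℝ)+1)) atTop (nhds 0) := by
        have := (tendsto_const_div_atTop_nhds_zero_nat C).comp (tendsto_add_atTop_nat 1)
        refine this.congr fun n => ?_
        simp only [Function.comp_apply]
        push_cast
        ring
      exact ge_of_tendsto' ht hstep
    have hIzero : ∫ x in S, φ x ∂mu01 = 0 :=
      le_antisymm hlim (integral_nonneg_of_ae (ae_restrict_of_ae (Eventually.of_forall hφ0)))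
    have hφzero : φ =ᵐ[mu01.restrict S] 0 :=
      (integral_eq_zero_iff_of_nonneg_ae (Eventually.of_forall hφ0)
        hφint.integrableOn).mp hIzero
    have onS : ∀ᵐ x ∂mu01, x ∈ S → φ x = 0 := (ae_restrict_iff' hS).mp hφzero
    rw [← Lp.coeFn_le]
    filter_upwards [offS, onS, Lp.coeFn_zero ℝ p mu01] with x hoff hon h0
    rw [h0]
    by_cases hxS : x ∈ S
    · have h1 := hon hxS
      have h2 : (U f : ℝ → ℝ) x ≤ φ x := le_max_left _ _
      rw [h1] at h2
      exact h2
    · exact hoff hxS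
end

section
/- Let E = ℓ∞(ℕ) and let S be the right shift operator on E. For m ≠ n, the operators S^m and S^n are disjoint in the order bounded operators on E, i.e., S^m ∧ S^n = 0. -/
variable (E : Type*) [AddCommGroup E] [Lattice E] [Module ℝ E]
  [CovariantClass E E (· + ·) (· ≤ ·)] [PosSMulMono ℝ E]

/-- `ℓ∞(ℕ)`, realized as the bounded (automatically continuous) functions `ℕ → ℝ`. -/
abbrev LinfN := BoundedContinuousFunction ℕ ℝ


noncomputable def restr (x : LinfN) (p : ℕ) : LinfN :=
  BoundedContinuousFunction.ofNormedAddCommGroup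
    (fun j => if j = p then x j else 0) continuous_of_discreteTopology ‖x‖
    (by intro j; split
        · exact x.norm_coe_le_norm j
        · simpa using norm_nonneg x)

@[simp] lemma restr_apply (x : LinfN) (p j : ℕ) :
    restr x p j = if j = p then x j else 0 := rfl

lemma shift_pow_ge (S : LinfN →ₗ[ℝ] LinfN)
    (hS : ∀ x : LinfN, (S x) 0 = 0 ∧ ∀ k : ℕ, (S x) (k + 1) = x k) :
    ∀ (m : ℕ) (x : LinfN) (k : ℕ), ((S ^ m) x) (m + k) = x k := by
  intro m
  induction m with
  | zero => intro x k; simp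
  | succ m ih =>
    intro x k
    have h1 : (S ^ (m + 1)) x = S ((S ^ m) x) := by
      rw [pow_succ']; rfl
    have h2 : m + 1 + k = (m + k) + 1 := by omega
    rw [h1, h2, (hS ((S ^ m) x)).2 (m + k), ih x k]

lemma shift_pow_lt (S : LinfN →ₗ[ℝ] LinfN)
    (hS : ∀ x : LinfN, (S x) 0 = 0 ∧ ∀ k : ℕ, (S x) (k + 1) = x k) :
    ∀ (m : ℕ) (x : LinfN) (k : ℕ), k < m → ((S ^ m) x) k = 0 := by
  intro m
  induction m with
  | zero => intro x k hk; omega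
  | succ m ih =>
    intro x k hk
    have h1 : (S ^ (m + 1)) x = S ((S ^ m) x) := by
      rw [pow_succ']; rfl
    rw [h1]
    cases k with
    | zero => exact (hS ((S ^ m) x)).1
    | succ j => rw [(hS ((S ^ m) x)).2 j, ih x j (by omega)]

lemma shift_pow_pos (S : LinfN →ₗ[ℝ] LinfN)
    (hS : ∀ x : LinfN, (S x) 0 = 0 ∧ ∀ k : ℕ, (S x) (k + 1) = x k)
    (m : ℕ) : opLE LinfN 0 (S ^ m) := by
  intro x hx
  intro k
  show (0 : LinfN) k ≤ ((S ^ m) x) k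
  rcases le_or_gt m k with h | h
  · have hk : k = m + (k - m) := by omega
    rw [hk, shift_pow_ge S hS m x (k - m)]
    simpa using hx (k - m)
  · rw [shift_pow_lt S hS m x k h]
    simp

/-- powers `S^m`, `S^n` (with `m ≠ n`) of the right shift `S` on `ℓ∞(ℕ)` are
disjoint in the order bounded operators: `0` is the infimum of `S^m` and `S^n` in the
operator order. -/
theorem stmt8 (S : LinfN →ₗ[ℝ] LinfN)
    (hS : ∀ x : LinfN, (S x) 0 = 0 ∧ ∀ k : ℕ, (S x) (k + 1) = x k)
    (m n : ℕ) (hmn : m ≠ n) :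
    opLE LinfN 0 (S ^ m) ∧ opLE LinfN 0 (S ^ n) ∧
      ∀ U : LinfN →ₗ[ℝ] LinfN, IsOrderBoundedOp LinfN U →
        opLE LinfN U (S ^ m) → opLE LinfN U (S ^ n) → opLE LinfN U 0 := by
  refine ⟨shift_pow_pos S hS m, shift_pow_pos S hS n, ?_⟩
  intro U _ hUm hUn x hx
  intro k
  show (U x) k ≤ (0 : LinfN) k
  simp only [BoundedContinuousFunction.coe_zero, Pi.zero_apply]
  rcases le_or_gt m k with hmk | hmk
  · -- split x = y + z, z supported at k - m
    set z : LinfN := restr x (k - m) with hzdef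
    set y : LinfN := x - z with hydef
    have hz0 : (0 : LinfN) ≤ z := by
      intro j
      show (0 : LinfN) j ≤ z j
      simp only [BoundedContinuousFunction.coe_zero, Pi.zero_apply, hzdef, restr_apply]
      split
      · simpa using hx _
      · exact le_refl 0
    have hy0 : (0 : LinfN) ≤ y := by
      intro j
      show (0 : LinfN) j ≤ y j
      have hxj : (0:ℝ) ≤ x j := by simpa using hx j
      simp only [BoundedContinuousFunction.coe_zero, Pi.zero_apply, hydef,
        BoundedContinuousFunction.coe_sub, Pi.sub_apply, hzdef, restr_apply]
      split <;> simp [hxj]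
    have hsum : U x = U y + U z := by
      rw [← map_add]; congr 1; simp [hydef]
    have h1 : (U y) k ≤ ((S ^ m) y) k := hUm y hy0 k
    have h2 : (U z) k ≤ ((S ^ n) z) k := hUn z hz0 k
    have hym : ((S ^ m) y) k = 0 := by
      have hk : k = m + (k - m) := by omega
      rw [hk, shift_pow_ge S hS m y (k - m)]
      simp [hydef, hzdef]
    have hzn : ((S ^ n) z) k = 0 := by
      rcases le_or_gt n k with hnk | hnk
      · have hk : k = n + (k - n) := by omega
        rw [hk, shift_pow_ge S hS n z (k - n)]
        have : k - n ≠ k - m := by omega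
        simp [hzdef, this]
      · exact shift_pow_lt S hS n z k hnk
    calc (U x) k = (U y) k + (U z) k := by
          rw [hsum]; rfl
      _ ≤ ((S ^ m) y) k + ((S ^ n) z) k := add_le_add h1 h2
      _ = 0 := by rw [hym, hzn, add_zero]
  · calc (U x) k ≤ ((S ^ m) x) k := hUm x hx k
      _ = 0 := shift_pow_lt S hS m x k hmk
end

section
/- Let E = ℓ∞(ℕ), let S be the right shift on E, and set T_n = S^n for n ≥ 1. Then the set {T_n : n ≥ 1} is not order bounded in the order bounded operators on E, although for each x ∈ E the set {T_n x : n ≥ 1} is order bounded in E. -/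
variable (E : Type*) [AddCommGroup E] [Lattice E] [Module ℝ E]
  [CovariantClass E E (· + ·) (· ≤ ·)] [PosSMulMono ℝ E]

/-- The indicator of `{j}` as an element of `ℓ∞(ℕ)`. -/
noncomputable def stmt9Delta (j : ℕ) : LinfN :=
  ⟨⟨fun k => if k = j then 1 else 0, continuous_of_discreteTopology⟩, 2, by
    intro a b
    dsimp
    split <;> split <;> norm_num⟩

theorem stmt9Delta_apply (j k : ℕ) : stmt9Delta j k = if k = j then 1 else 0 := rfl

theorem stmt9_le_iff (f g : LinfN) : f ≤ g ↔ ∀ k, f k ≤ g k := Iff.rfl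

theorem stmt9_pow_apply (S : LinfN →ₗ[ℝ] LinfN)
    (hS : ∀ x : LinfN, (S x) 0 = 0 ∧ ∀ k : ℕ, (S x) (k + 1) = x k) :
    ∀ (n : ℕ) (x : LinfN) (k : ℕ), (S ^ n) x k = if n ≤ k then x (k - n) else 0 := by
  intro n
  induction n with
  | zero => intro x k; simp
  | succ n ih =>
    intro x k
    rw [pow_succ', Module.End.mul_apply]
    cases k with
    | zero =>
      rw [(hS ((S ^ n) x)).1]
      simp
    | succ j =>
      rw [(hS ((S ^ n) x)).2 j, ih x j]
      simp [Nat.succ_le_succ_iff, Nat.succ_sub_succ]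

/-- for the right shift `S` on `ℓ∞(ℕ)` and `T n = S^n` (`n ≥ 1`), each orbit
`{T n x : n ≥ 1}` is order bounded in `ℓ∞(ℕ)`, but the set `{T n : n ≥ 1}` is not order
bounded in the order bounded operators (no order bounded operator dominates all `T n`). -/
theorem stmt9 (S : LinfN →ₗ[ℝ] LinfN)
    (hS : ∀ x : LinfN, (S x) 0 = 0 ∧ ∀ k : ℕ, (S x) (k + 1) = x k) :
    (∀ x : LinfN, ∃ c d : LinfN, ∀ n : ℕ, 1 ≤ n → c ≤ (S ^ n) x ∧ (S ^ n) x ≤ d) ∧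
      ¬ ∃ U : LinfN →ₗ[ℝ] LinfN, IsOrderBoundedOp LinfN U ∧
          ∀ n : ℕ, 1 ≤ n → opLE LinfN (S ^ n) U := by
  have le_iff := stmt9_le_iff
  constructor
  · intro x
    refine ⟨BoundedContinuousFunction.const ℕ (-‖x‖), BoundedContinuousFunction.const ℕ ‖x‖,
      fun n _ => ⟨?_, ?_⟩⟩ <;>
    · rw [le_iff]
      intro k
      rw [stmt9_pow_apply S hS n x k]
      have hb : ∀ m : ℕ, |x m| ≤ ‖x‖ := fun m =>
        (x.norm_coe_le_norm m).trans_eq' (Real.norm_eq_abs _).symm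
      have h0 : (0:ℝ) ≤ ‖x‖ := norm_nonneg x
      simp only [BoundedContinuousFunction.const_apply]
      split
      · first
        | exact neg_le_of_abs_le (hb _)
        | exact le_of_abs_le (hb _)
      · first
        | exact neg_nonpos_of_nonneg h0
        | exact h0
  · rintro ⟨U, -, hU⟩
    -- U is positive
    have hUpos : ∀ x : LinfN, 0 ≤ x → 0 ≤ U x := by
      intro x hx
      have h1 := hU 1 le_rfl x hx
      refine le_trans ?_ h1
      rw [le_iff]
      intro k
      rw [stmt9_pow_apply S hS 1 x k]
      have hx' : ∀ m, 0 ≤ x m := (le_iff 0 x).mp hx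
      split
      · exact hx' _
      · exact le_rfl
    -- key: (U (stmt9Delta j)) k ≥ 1 for k > j
    have hkey : ∀ j k : ℕ, j < k → (1:ℝ) ≤ U (stmt9Delta j) k := by
      intro j k hjk
      have hd : (0:LinfN) ≤ stmt9Delta j := by
        rw [le_iff]; intro m
        rw [stmt9Delta_apply]
        split <;> norm_num
      have h := hU (k - j) (Nat.le_sub_of_add_le (by omega)) (stmt9Delta j) hd
      have h2 := (le_iff _ _).mp h k
      rw [stmt9_pow_apply S hS (k - j) (stmt9Delta j) k] at h2
      rw [if_pos (by omega), stmt9Delta_apply, if_pos (by omega)] at h2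
      exact h2
    -- partial sums
    set w : LinfN := U 1 with hw
    have hwm : ∀ m : ℕ, (m : ℝ) ≤ w m := by
      intro m
      set e : LinfN := ∑ j ∈ Finset.range m, stmt9Delta j with he
      have h1 : e ≤ 1 := by
        rw [le_iff]
        intro k
        have : e k = ∑ j ∈ Finset.range m, stmt9Delta j k := by
          rw [he]
          induction (Finset.range m) using Finset.induction_on with
          | empty => simp
          | insert _ _ hnot ih =>
            rw [Finset.sum_insert hnot, Finset.sum_insert hnot,
              BoundedContinuousFunction.add_apply, ih]
        rw [this]
        simp only [stmt9Delta_apply]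
        rw [Finset.sum_ite_eq (Finset.range m) k (fun _ => (1:ℝ))]
        have : (1:LinfN) k = 1 := rfl
        rw [this]
        split <;> norm_num
      have h2 : U e ≤ w := by
        have hp := hUpos (1 - e) (by rwa [sub_nonneg])
        rw [map_sub] at hp
        rw [hw]
        exact sub_nonneg.mp hp
      have h4 : (m : ℝ) ≤ U e m := by
        have : U e = ∑ j ∈ Finset.range m, U (stmt9Delta j) := by
          rw [he, map_sum]
        have happ : U e m = ∑ j ∈ Finset.range m, U (stmt9Delta j) m := by
          rw [this]
          induction (Finset.range m) using Finset.induction_on with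
          | empty => simp
          | insert _ _ hnot ih =>
            rw [Finset.sum_insert hnot, Finset.sum_insert hnot,
              BoundedContinuousFunction.add_apply, ih]
        rw [happ]
        calc (m:ℝ) = ∑ _j ∈ Finset.range m, (1:ℝ) := by simp
          _ ≤ _ := Finset.sum_le_sum (fun j hj =>
              hkey j m (Finset.mem_range.mp hj))
      exact h4.trans ((le_iff _ _).mp h2 m)
    obtain ⟨m, hm⟩ := exists_nat_gt ‖w‖
    have hb : w m ≤ ‖w‖ := le_trans (le_abs_self _)
      (by rw [← Real.norm_eq_abs]; exact w.norm_coe_le_norm m)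
    linarith [hwm m]
end
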